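/- arXiv:math/0111034 — 2 statements merged into one kernel-verified Lean document; each statement's English description precedes it below -/
import Mathlib

section
/- For every perfect matching M of the Aztec diamond graph A_n, every cell of A_n contains 0, 1, or 2 edges of M, and the cell matrix of M is an n×n alternating-sign matrix. -/
open scoped Classical

/-- A finset `M` of edges is a perfect matching of the graph `G` relative to the
vertex set `S`: every edge of `M` is an edge of `G`, and every vertex of `S`
belongs to exactly one edge of `M`. -/
def IsPM {V : Type} (G : SimpleGraph V) (S : Set V) (M : Finset (Sym2 V)) : Prop :=
  (∀ e ∈ M, e ∈ G.edgeSet) ∧ ∀ v ∈ S, ∃! e, e ∈ M ∧ v ∈ e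

/-- `mSum G S ω` is the sum, over all perfect matchings `M` of `G` relative to the
vertex set `S`, of the product of the `ω`-weights of the edges of `M`. -/
noncomputable def mSum {V : Type} (G : SimpleGraph V) (S : Set V) (ω : Sym2 V → ℝ) : ℝ :=
  ∑ᶠ M ∈ {M : Finset (Sym2 V) | IsPM G S M}, ∏ e ∈ M, ω e

/-- The vertex set of the Aztec diamond graph of order `n`. -/
def aztecSet (n : ℕ) : Set (ℤ × ℤ) :=
  {v | Odd (v.1 + v.2) ∧ |v.1| ≤ (n : ℤ) ∧ |v.2| ≤ (n : ℤ)}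

/-- The Aztec diamond graph of order `n`, realized as a graph on `ℤ × ℤ`:
two vertices of the diamond are adjacent exactly when their Euclidean
distance is `√2`. -/
def aztec (n : ℕ) : SimpleGraph (ℤ × ℤ) where
  Adj u v := u ∈ aztecSet n ∧ v ∈ aztecSet n ∧ (u.1 - v.1) ^ 2 + (u.2 - v.2) ^ 2 = 2
  symm := by
    constructor
    rintro u v ⟨hu, hv, h⟩
    exact ⟨hv, hu, by linear_combination h⟩
  loopless := by
    constructor
    rintro u ⟨-, -, h⟩
    simp at h

/-- `(p, q)` is the center of a cell of the Aztec diamond graph of order `n`: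
`p ≡ q ≡ n + 1 (mod 2)`, `|p| ≤ n − 1` and `|q| ≤ n − 1`. -/
def IsCellCenter (n : ℕ) (p q : ℤ) : Prop :=
  (p - ((n : ℤ) + 1)) % 2 = 0 ∧ (q - ((n : ℤ) + 1)) % 2 = 0 ∧
    |p| ≤ (n : ℤ) - 1 ∧ |q| ≤ (n : ℤ) - 1

/-- The NW edge of the cell with center `(p, q)`. -/
def nwEdge (p q : ℤ) : Sym2 (ℤ × ℤ) := s((p, q + 1), (p - 1, q))

/-- The NE edge of the cell with center `(p, q)`. -/
def neEdge (p q : ℤ) : Sym2 (ℤ × ℤ) := s((p, q + 1), (p + 1, q))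

/-- The SW edge of the cell with center `(p, q)`. -/
def swEdge (p q : ℤ) : Sym2 (ℤ × ℤ) := s((p - 1, q), (p, q - 1))

/-- The SE edge of the cell with center `(p, q)`. -/
def seEdge (p q : ℤ) : Sym2 (ℤ × ℤ) := s((p + 1, q), (p, q - 1))

/-- The cell-factor `D_ω` of the cell with center `(p, q)`:
`ω(NW)·ω(SE) + ω(NE)·ω(SW)`. -/
noncomputable def cellFactor (ω : Sym2 (ℤ × ℤ) → ℝ) (p q : ℤ) : ℝ :=
  ω (nwEdge p q) * ω (seEdge p q) + ω (neEdge p q) * ω (swEdge p q)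

/-- The number of edges of the finset `M` that are edges of the cell with
center `(p, q)`. -/
def cellEdgeCount (M : Finset (Sym2 (ℤ × ℤ))) (p q : ℤ) : ℕ :=
  (M.filter fun e => e = nwEdge p q ∨ e = neEdge p q ∨ e = swEdge p q ∨ e = seEdge p q).card

/-- The center of the cell of the Aztec diamond graph of order `n` sitting in row
`i` (rows indexed by decreasing `q`-coordinate) and column `j` (columns indexed by
increasing `p`-coordinate). -/
def cellCenter (n : ℕ) (i j : Fin n) : ℤ × ℤ :=
  (2 * (j : ℤ) - (n : ℤ) + 1, (n : ℤ) - 1 - 2 * (i : ℤ))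

/-- The cell matrix of a finset `M` of edges of the Aztec diamond graph of order
`n`: the entry at a cell is the number of edges of `M` contained in that cell,
minus `1`. -/
def cellMatrix (n : ℕ) (M : Finset (Sym2 (ℤ × ℤ))) : Matrix (Fin n) (Fin n) ℤ :=
  fun i j => (cellEdgeCount M (cellCenter n i j).1 (cellCenter n i j).2 : ℤ) - 1

/-- `A` is an alternating-sign matrix: the entries lie in `{−1, 0, 1}` and in every
row and in every column the nonzero entries alternate in sign and sum to `1`
(equivalently, all partial sums along a row or a column are `0` or `1`, and the
complete row and column sums are `1`). -/
def IsASM {n : ℕ} (A : Matrix (Fin n) (Fin n) ℤ) : Prop :=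
  (∀ i j, A i j ∈ ({-1, 0, 1} : Set ℤ)) ∧
  (∀ i k, (∑ j ∈ Finset.Iic k, A i j) ∈ ({0, 1} : Set ℤ)) ∧
  (∀ i, (∑ j, A i j) = 1) ∧
  (∀ j k, (∑ i ∈ Finset.Iic k, A i j) ∈ ({0, 1} : Set ℤ)) ∧
  (∀ j, (∑ i, A i j) = 1)


section AztecProof

open Finset

/-- Integer solutions of `x² + y² = 2`. -/
private lemma sq_two {x y : ℤ} (h : x ^ 2 + y ^ 2 = 2) :
    (x = 1 ∨ x = -1) ∧ (y = 1 ∨ y = -1) := by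
  have h1 : x ^ 2 ≤ 2 := by nlinarith [sq_nonneg y]
  have h2 : y ^ 2 ≤ 2 := by nlinarith [sq_nonneg x]
  have hx1 : -2 ≤ x := by nlinarith
  have hx2 : x ≤ 2 := by nlinarith
  have hy1 : -2 ≤ y := by nlinarith
  have hy2 : y ≤ 2 := by nlinarith
  interval_cases x <;> interval_cases y <;> revert h <;> norm_num

private lemma mem_aztecSet_iff {n : ℕ} {x y : ℤ} :
    (x, y) ∈ aztecSet n ↔ (x + y) % 2 = 1 ∧ -(n : ℤ) ≤ x ∧ x ≤ n ∧ -(n : ℤ) ≤ y ∧ y ≤ n := by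
  simp only [aztecSet, Set.mem_setOf_eq, Int.odd_iff, abs_le]
  tauto

/-- At every vertex of the Aztec diamond there is a unique matched edge, and it is
a diagonal step that stays inside the diamond. -/
private lemma at_vertex {n : ℕ} {M : Finset (Sym2 (ℤ × ℤ))}
    (hM : IsPM (aztec n) (aztecSet n) M) {x q : ℤ} (hv : (x, q) ∈ aztecSet n) :
    ∃ ε δ : ℤ, (ε = 1 ∨ ε = -1) ∧ (δ = 1 ∨ δ = -1) ∧ |x + ε| ≤ (n : ℤ) ∧ |q + δ| ≤ (n : ℤ) ∧
      s((x, q), (x + ε, q + δ)) ∈ M ∧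
      ∀ ε' δ' : ℤ, (ε' = 1 ∨ ε' = -1) → (δ' = 1 ∨ δ' = -1) →
        s((x, q), (x + ε', q + δ')) ∈ M → ε' = ε ∧ δ' = δ := by
  obtain ⟨e, ⟨heM, hve⟩, huniq⟩ := hM.2 (x, q) hv
  obtain ⟨w, rfl⟩ := Sym2.mem_iff_exists.mp hve
  have heE := hM.1 _ heM
  rw [SimpleGraph.mem_edgeSet] at heE
  obtain ⟨-, hwS, hd⟩ := heE
  obtain ⟨hex, hey⟩ := sq_two hd
  refine ⟨w.1 - x, w.2 - q, by omega, by omega, ?_, ?_, ?_, ?_⟩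
  · have e : x + (w.1 - x) = w.1 := by ring
    rw [e]; exact hwS.2.1
  · have e : q + (w.2 - q) = w.2 := by ring
    rw [e]; exact hwS.2.2
  · have : (x + (w.1 - x), q + (w.2 - q)) = w := by
      ext <;> simp <;> ring
    rw [this]; exact heM
  · intro ε' δ' hε' hδ' hmem
    have h1 : s((x, q), (x + ε', q + δ')) = s((x, q), w) :=
      huniq _ ⟨hmem, Sym2.mem_mk_left _ _⟩
    rw [Sym2.eq_iff] at h1
    rcases h1 with ⟨-, h1⟩ | ⟨h1, -⟩
    · rw [Prod.ext_iff] at h1; simp at h1; omega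
    · rw [Prod.ext_iff] at h1; simp at h1; omega

/-- A vertex of the diamond lies in at most one edge of the matching. -/
private lemma edge_unique {n : ℕ} {M : Finset (Sym2 (ℤ × ℤ))}
    (hM : IsPM (aztec n) (aztecSet n) M) {e₁ e₂ : Sym2 (ℤ × ℤ)} {v : ℤ × ℤ}
    (h1 : e₁ ∈ M) (h2 : e₂ ∈ M) (hv1 : v ∈ e₁) (hv2 : v ∈ e₂) : e₁ = e₂ := by
  have hvS : v ∈ aztecSet n := by
    obtain ⟨w, rfl⟩ := Sym2.mem_iff_exists.mp hv1
    have heE := hM.1 _ h1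
    rw [SimpleGraph.mem_edgeSet] at heE
    exact heE.1
  obtain ⟨e, -, huniq⟩ := hM.2 v hvS
  rw [huniq e₁ ⟨h1, hv1⟩, huniq e₂ ⟨h2, hv2⟩]

/-- The matched edge at `(x, q)` goes to the right. -/
private def Rdir (M : Finset (Sym2 (ℤ × ℤ))) (x q : ℤ) : Prop :=
  s((x, q), (x + 1, q + 1)) ∈ M ∨ s((x, q), (x + 1, q + -1)) ∈ M

/-- The matched edge at `(x, q)` goes to the left. -/
private def Ldir (M : Finset (Sym2 (ℤ × ℤ))) (x q : ℤ) : Prop :=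
  s((x, q), (x + -1, q + 1)) ∈ M ∨ s((x, q), (x + -1, q + -1)) ∈ M

/-- The matched edge at `(x, y)` goes down. -/
private def Ddir (M : Finset (Sym2 (ℤ × ℤ))) (x y : ℤ) : Prop :=
  s((x, y), (x + 1, y + -1)) ∈ M ∨ s((x, y), (x + -1, y + -1)) ∈ M

/-- The matched edge at `(x, y)` goes up. -/
private def Udir (M : Finset (Sym2 (ℤ × ℤ))) (x y : ℤ) : Prop :=
  s((x, y), (x + 1, y + 1)) ∈ M ∨ s((x, y), (x + -1, y + 1)) ∈ M

private lemma xor_lr {n : ℕ} {M : Finset (Sym2 (ℤ × ℤ))}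
    (hM : IsPM (aztec n) (aztecSet n) M) {x q : ℤ} (hv : (x, q) ∈ aztecSet n) :
    (Rdir M x q ∧ ¬ Ldir M x q) ∨ (¬ Rdir M x q ∧ Ldir M x q) := by
  obtain ⟨ε, δ, hε, hδ, -, -, hmem, huniq⟩ := at_vertex hM hv
  rcases hε with rfl | rfl
  · left
    constructor
    · rcases hδ with rfl | rfl
      · exact Or.inl hmem
      · exact Or.inr hmem
    · rintro (h | h)
      · exact absurd (huniq (-1) 1 (by omega) (by omega) h).1 (by omega)
      · exact absurd (huniq (-1) (-1) (by omega) (by omega) h).1 (by omega)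
  · right
    constructor
    · rintro (h | h)
      · exact absurd (huniq 1 1 (by omega) (by omega) h).1 (by omega)
      · exact absurd (huniq 1 (-1) (by omega) (by omega) h).1 (by omega)
    · rcases hδ with rfl | rfl
      · exact Or.inl hmem
      · exact Or.inr hmem

private lemma xor_ud {n : ℕ} {M : Finset (Sym2 (ℤ × ℤ))}
    (hM : IsPM (aztec n) (aztecSet n) M) {x y : ℤ} (hv : (x, y) ∈ aztecSet n) :
    (Ddir M x y ∧ ¬ Udir M x y) ∨ (¬ Ddir M x y ∧ Udir M x y) := by
  obtain ⟨ε, δ, hε, hδ, -, -, hmem, huniq⟩ := at_vertex hM hv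
  rcases hδ with rfl | rfl
  · right
    constructor
    · rintro (h | h)
      · exact absurd (huniq 1 (-1) (by omega) (by omega) h).2 (by omega)
      · exact absurd (huniq (-1) (-1) (by omega) (by omega) h).2 (by omega)
    · rcases hε with rfl | rfl
      · exact Or.inl hmem
      · exact Or.inr hmem
  · left
    constructor
    · rcases hε with rfl | rfl
      · exact Or.inl hmem
      · exact Or.inr hmem
    · rintro (h | h)
      · exact absurd (huniq 1 1 (by omega) (by omega) h).2 (by omega)
      · exact absurd (huniq (-1) 1 (by omega) (by omega) h).2 (by omega)

private lemma forced_right {n : ℕ} {M : Finset (Sym2 (ℤ × ℤ))}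
    (hM : IsPM (aztec n) (aztecSet n) M) {q : ℤ} (hv : (-(n : ℤ), q) ∈ aztecSet n) :
    Rdir M (-(n : ℤ)) q := by
  obtain ⟨ε, δ, hε, hδ, hb, -, hmem, -⟩ := at_vertex hM hv
  have hε1 : ε = 1 := by rw [abs_le] at hb; omega
  subst hε1
  rcases hδ with rfl | rfl
  · exact Or.inl hmem
  · exact Or.inr hmem

private lemma forced_left {n : ℕ} {M : Finset (Sym2 (ℤ × ℤ))}
    (hM : IsPM (aztec n) (aztecSet n) M) {q : ℤ} (hv : ((n : ℤ), q) ∈ aztecSet n) :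
    Ldir M (n : ℤ) q := by
  obtain ⟨ε, δ, hε, hδ, hb, -, hmem, -⟩ := at_vertex hM hv
  have hε1 : ε = -1 := by rw [abs_le] at hb; omega
  subst hε1
  rcases hδ with rfl | rfl
  · exact Or.inl hmem
  · exact Or.inr hmem

private lemma forced_down {n : ℕ} {M : Finset (Sym2 (ℤ × ℤ))}
    (hM : IsPM (aztec n) (aztecSet n) M) {x : ℤ} (hv : (x, (n : ℤ)) ∈ aztecSet n) :
    Ddir M x (n : ℤ) := by
  obtain ⟨ε, δ, hε, hδ, -, hb, hmem, -⟩ := at_vertex hM hv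
  have hδ1 : δ = -1 := by rw [abs_le] at hb; omega
  subst hδ1
  rcases hε with rfl | rfl
  · exact Or.inl hmem
  · exact Or.inr hmem

private lemma forced_up {n : ℕ} {M : Finset (Sym2 (ℤ × ℤ))}
    (hM : IsPM (aztec n) (aztecSet n) M) {x : ℤ} (hv : (x, -(n : ℤ)) ∈ aztecSet n) :
    Udir M x (-(n : ℤ)) := by
  obtain ⟨ε, δ, hε, hδ, -, hb, hmem, -⟩ := at_vertex hM hv
  have hδ1 : δ = 1 := by rw [abs_le] at hb; omega
  subst hδ1
  rcases hε with rfl | rfl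
  · exact Or.inl hmem
  · exact Or.inr hmem

-- Canonical forms of the four cell edges.
private lemma nwEdge_eq (p q : ℤ) : nwEdge p q = s((p - 1, q), (p - 1 + 1, q + 1)) := by
  simp only [nwEdge, Sym2.eq_iff, Prod.mk.injEq, true_and, and_true]; omega
private lemma swEdge_eq (p q : ℤ) : swEdge p q = s((p - 1, q), (p - 1 + 1, q + -1)) := by
  simp only [swEdge, Sym2.eq_iff, Prod.mk.injEq, true_and, and_true]; omega
private lemma neEdge_eq (p q : ℤ) : neEdge p q = s((p + 1, q), (p + 1 + -1, q + 1)) := by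
  simp only [neEdge, Sym2.eq_iff, Prod.mk.injEq, true_and, and_true]; omega
private lemma seEdge_eq (p q : ℤ) : seEdge p q = s((p + 1, q), (p + 1 + -1, q + -1)) := by
  simp only [seEdge, Sym2.eq_iff, Prod.mk.injEq, true_and, and_true]; omega
private lemma nwEdge_eq' (p q : ℤ) : nwEdge p q = s((p, q + 1), (p + -1, q + 1 + -1)) := by
  simp only [nwEdge, Sym2.eq_iff, Prod.mk.injEq, true_and, and_true]; omega
private lemma neEdge_eq' (p q : ℤ) : neEdge p q = s((p, q + 1), (p + 1, q + 1 + -1)) := by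
  simp only [neEdge, Sym2.eq_iff, Prod.mk.injEq, true_and, and_true]; omega
private lemma swEdge_eq' (p q : ℤ) : swEdge p q = s((p, q - 1), (p + -1, q - 1 + 1)) := by
  simp only [swEdge, Sym2.eq_iff, Prod.mk.injEq, true_and, and_true]; omega
private lemma seEdge_eq' (p q : ℤ) : seEdge p q = s((p, q - 1), (p + 1, q - 1 + 1)) := by
  simp only [seEdge, Sym2.eq_iff, Prod.mk.injEq, true_and, and_true]; omega

private lemma edges_distinct (p q : ℤ) :
    nwEdge p q ≠ neEdge p q ∧ nwEdge p q ≠ swEdge p q ∧ nwEdge p q ≠ seEdge p q ∧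
    neEdge p q ≠ swEdge p q ∧ neEdge p q ≠ seEdge p q ∧ swEdge p q ≠ seEdge p q := by
  refine ⟨?_, ?_, ?_, ?_, ?_, ?_⟩ <;>
    simp only [nwEdge, neEdge, swEdge, seEdge, Sym2.eq_iff, Prod.mk.injEq, ne_eq] <;> omega

private lemma count_four (M : Finset (Sym2 (ℤ × ℤ))) (p q : ℤ) :
    cellEdgeCount M p q =
      (if nwEdge p q ∈ M then 1 else 0) + (if neEdge p q ∈ M then 1 else 0) +
      (if swEdge p q ∈ M then 1 else 0) + (if seEdge p q ∈ M then 1 else 0) := by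
  classical
  obtain ⟨d1, d2, d3, d4, d5, d6⟩ := edges_distinct p q
  have h1 : (M.filter fun e => e = nwEdge p q ∨ e = neEdge p q ∨ e = swEdge p q ∨ e = seEdge p q)
      = ({nwEdge p q, neEdge p q, swEdge p q, seEdge p q} : Finset _).filter (· ∈ M) := by
    ext e
    simp only [Finset.mem_filter, Finset.mem_insert, Finset.mem_singleton]
    tauto
  rw [cellEdgeCount, h1, Finset.card_filter]
  rw [Finset.sum_insert (by simp [d1, d2, d3]),
    Finset.sum_insert (by simp [d4, d5]),
    Finset.sum_insert (by simp [d6]), Finset.sum_singleton]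
  ring

private lemma ind_or {a b : Prop} [Decidable a] [Decidable b] (h : ¬ (a ∧ b)) :
    (if a ∨ b then (1 : ℕ) else 0) = (if a then 1 else 0) + (if b then 1 else 0) := by
  by_cases ha : a <;> by_cases hb : b <;> simp_all

/-- Horizontal decomposition of the cell count. -/
private lemma count_row {n : ℕ} {M : Finset (Sym2 (ℤ × ℤ))}
    (hM : IsPM (aztec n) (aztecSet n) M) (p q : ℤ) :
    cellEdgeCount M p q =
      (if Rdir M (p - 1) q then 1 else 0) + (if Ldir M (p + 1) q then 1 else 0) := by
  have hR : Rdir M (p - 1) q ↔ (nwEdge p q ∈ M ∨ swEdge p q ∈ M) := by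
    rw [Rdir, nwEdge_eq, swEdge_eq]
  have hL : Ldir M (p + 1) q ↔ (neEdge p q ∈ M ∨ seEdge p q ∈ M) := by
    rw [Ldir, neEdge_eq, seEdge_eq]
  obtain ⟨-, d2, -, -, d5, -⟩ := edges_distinct p q
  have hnb1 : ¬ (nwEdge p q ∈ M ∧ swEdge p q ∈ M) := by
    rintro ⟨h1, h2⟩
    exact d2 (edge_unique hM h1 h2 (by rw [nwEdge]; exact Sym2.mem_mk_right _ _)
      (by rw [swEdge]; exact Sym2.mem_mk_left _ _))
  have hnb2 : ¬ (neEdge p q ∈ M ∧ seEdge p q ∈ M) := by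
    rintro ⟨h1, h2⟩
    exact d5 (edge_unique hM h1 h2 (by rw [neEdge]; exact Sym2.mem_mk_right _ _)
      (by rw [seEdge]; exact Sym2.mem_mk_left _ _))
  rw [count_four, if_congr hR rfl rfl, if_congr hL rfl rfl, ind_or hnb1, ind_or hnb2]
  ring

/-- Vertical decomposition of the cell count. -/
private lemma count_col {n : ℕ} {M : Finset (Sym2 (ℤ × ℤ))}
    (hM : IsPM (aztec n) (aztecSet n) M) (p q : ℤ) :
    cellEdgeCount M p q =
      (if Ddir M p (q + 1) then 1 else 0) + (if Udir M p (q - 1) then 1 else 0) := by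
  have hD : Ddir M p (q + 1) ↔ (neEdge p q ∈ M ∨ nwEdge p q ∈ M) := by
    rw [Ddir, neEdge_eq', nwEdge_eq']
  have hU : Udir M p (q - 1) ↔ (seEdge p q ∈ M ∨ swEdge p q ∈ M) := by
    rw [Udir, seEdge_eq', swEdge_eq']
  obtain ⟨d1, -, -, -, -, d6⟩ := edges_distinct p q
  have hnb1 : ¬ (neEdge p q ∈ M ∧ nwEdge p q ∈ M) := by
    rintro ⟨h1, h2⟩
    exact d1 (edge_unique hM h2 h1 (by rw [nwEdge]; exact Sym2.mem_mk_left _ _)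
      (by rw [neEdge]; exact Sym2.mem_mk_left _ _))
  have hnb2 : ¬ (seEdge p q ∈ M ∧ swEdge p q ∈ M) := by
    rintro ⟨h1, h2⟩
    exact d6 (edge_unique hM h2 h1 (by rw [swEdge]; exact Sym2.mem_mk_right _ _)
      (by rw [seEdge]; exact Sym2.mem_mk_right _ _))
  rw [count_four, if_congr hD rfl rfl, if_congr hU rfl rfl, ind_or hnb1, ind_or hnb2]
  ring

private lemma telescope {A B : ℕ → ℤ} {n : ℕ} (h0 : A 0 = 1)
    (hmid : ∀ m, m + 1 < n → B m + A (m + 1) = 1) :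
    ∀ k, k < n → ∑ m ∈ Finset.range (k + 1), (A m + B m) = (k + 1 : ℤ) + B k := by
  intro k
  induction k with
  | zero => intro _; simp [h0]
  | succ k ih =>
    intro hk
    rw [Finset.sum_range_succ, ih (by omega)]
    have := hmid k (by omega)
    push_cast
    linarith

private lemma sum_Iic_fin {n : ℕ} (f : Fin n → ℤ) (k : Fin n) :
    ∑ j ∈ Finset.Iic k, f j
      = ∑ m ∈ Finset.range (k.1 + 1), (if h : m < n then f ⟨m, h⟩ else 0) := by
  classical
  have h1 : ∑ j ∈ Finset.Iic k, f j = ∑ j : Fin n, if j ≤ k then f j else 0 := by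
    rw [← Finset.sum_filter]
    apply Finset.sum_congr _ (fun _ _ => rfl)
    ext j
    simp [Finset.mem_Iic]
  rw [h1]
  have h2 : ∀ j : Fin n, (if j ≤ k then f j else 0)
      = (fun m : ℕ => if h : m < n then (if m ≤ k.1 then f ⟨m, h⟩ else 0) else 0) j.1 := by
    intro j
    simp only [dif_pos j.isLt, Fin.eta, Fin.le_def]
  rw [Finset.sum_congr rfl fun j _ => h2 j,
    Fin.sum_univ_eq_sum_range (fun m : ℕ => if h : m < n then (if m ≤ k.1 then f ⟨m, h⟩ else 0) else 0)]
  rw [← Finset.sum_subset (Finset.range_subset_range.mpr (by omega : k.1 + 1 ≤ n))]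
  · apply Finset.sum_congr rfl
    intro m hm
    simp only [Finset.mem_range] at hm
    rw [dif_pos (by omega : m < n), dif_pos (by omega : m < n), if_pos (by omega : m ≤ k.1)]
  · intro m hm1 hm2
    simp only [Finset.mem_range] at hm1 hm2
    rw [dif_pos (by omega : m < n), if_neg (by omega)]

private lemma row_sum {n : ℕ} {M : Finset (Sym2 (ℤ × ℤ))}
    (hM : IsPM (aztec n) (aztecSet n) M) (i k : Fin n) :
    ∑ j ∈ Finset.Iic k, cellMatrix n M i j
      = if Ldir M (2 * (k : ℤ) - n + 2) ((n : ℤ) - 1 - 2 * (i : ℤ)) then 1 else 0 := by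
  classical
  set q : ℤ := (n : ℤ) - 1 - 2 * (i : ℤ) with hq
  have hi : (i : ℕ) < n := i.isLt
  have hkn : (k : ℕ) < n := k.isLt
  set A : ℕ → ℤ := fun m => if Rdir M (2 * (m : ℤ) - n) q then 1 else 0 with hA
  set B : ℕ → ℤ := fun m => if Ldir M (2 * (m : ℤ) - n + 2) q then 1 else 0 with hB
  have hcell : ∀ (j : Fin n), cellMatrix n M i j = A j.1 + B j.1 - 1 := by
    intro j
    have h1 : cellMatrix n M i j = (cellEdgeCount M (2 * (j : ℤ) - n + 1) q : ℤ) - 1 := rfl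
    rw [h1, count_row hM]
    have e1 : (2 * (j : ℤ) - n + 1) - 1 = 2 * (j : ℤ) - n := by ring
    have e2 : (2 * (j : ℤ) - n + 1) + 1 = 2 * (j : ℤ) - n + 2 := by ring
    rw [e1, e2, hA, hB]
    push_cast
    split_ifs <;> ring
  have hmem : ∀ x : ℤ, -(n : ℤ) ≤ x → x ≤ n → x % 2 = (n : ℤ) % 2 → (x, q) ∈ aztecSet n := by
    intro x hx1 hx2 hx3
    rw [mem_aztecSet_iff]
    omega
  have h0 : A 0 = 1 := by
    rw [hA]
    simp only [Nat.cast_zero, mul_zero, zero_sub]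
    rw [if_pos (forced_right hM (hmem (-(n : ℤ)) (by omega) (by omega) (by omega)))]
  have hmid : ∀ m, m + 1 < n → B m + A (m + 1) = 1 := by
    intro m hm
    have e3 : 2 * ((m + 1 : ℕ) : ℤ) - n = 2 * (m : ℤ) - n + 2 := by push_cast; ring
    rw [hA, hB]
    simp only [e3]
    have hv : (2 * (m : ℤ) - n + 2, q) ∈ aztecSet n := hmem _ (by omega) (by omega) (by omega)
    rcases xor_lr hM hv with ⟨h1, h2⟩ | ⟨h1, h2⟩
    · rw [if_pos h1, if_neg h2]; ring
    · rw [if_neg h1, if_pos h2]; ring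
  rw [sum_Iic_fin]
  have hrepl : ∀ m ∈ Finset.range (k.1 + 1),
      (if h : m < n then cellMatrix n M i ⟨m, h⟩ else 0) = A m + B m - 1 := by
    intro m hm
    simp only [Finset.mem_range] at hm
    rw [dif_pos (by omega : m < n), hcell ⟨m, by omega⟩]
  rw [Finset.sum_congr rfl hrepl]
  have := telescope h0 hmid k.1 hkn
  calc ∑ m ∈ Finset.range (k.1 + 1), (A m + B m - 1)
      = (∑ m ∈ Finset.range (k.1 + 1), (A m + B m)) - (k.1 + 1 : ℤ) := by
        rw [Finset.sum_sub_distrib]; simp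
    _ = B k.1 := by rw [this]; ring
    _ = _ := rfl

/-- The column partial sums of the cell matrix. -/
private lemma col_sum {n : ℕ} {M : Finset (Sym2 (ℤ × ℤ))}
    (hM : IsPM (aztec n) (aztecSet n) M) (j k : Fin n) :
    ∑ i ∈ Finset.Iic k, cellMatrix n M i j
      = if Udir M (2 * (j : ℤ) - n + 1) ((n : ℤ) - 2 * (k : ℤ) - 2) then 1 else 0 := by
  classical
  set p : ℤ := 2 * (j : ℤ) - n + 1 with hp
  have hj : (j : ℕ) < n := j.isLt
  have hkn : (k : ℕ) < n := k.isLt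
  set A : ℕ → ℤ := fun m => if Ddir M p ((n : ℤ) - 2 * (m : ℤ)) then 1 else 0 with hA
  set B : ℕ → ℤ := fun m => if Udir M p ((n : ℤ) - 2 * (m : ℤ) - 2) then 1 else 0 with hB
  have hcell : ∀ (i : Fin n), cellMatrix n M i j = A i.1 + B i.1 - 1 := by
    intro i
    have h1 : cellMatrix n M i j = (cellEdgeCount M p ((n : ℤ) - 1 - 2 * (i : ℤ)) : ℤ) - 1 := rfl
    rw [h1, count_col hM]
    have e1 : ((n : ℤ) - 1 - 2 * (i : ℤ)) + 1 = (n : ℤ) - 2 * (i : ℤ) := by ring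
    have e2 : ((n : ℤ) - 1 - 2 * (i : ℤ)) - 1 = (n : ℤ) - 2 * (i : ℤ) - 2 := by ring
    rw [e1, e2, hA, hB]
    push_cast
    split_ifs <;> ring
  have hmem : ∀ y : ℤ, -(n : ℤ) ≤ y → y ≤ n → y % 2 = (n : ℤ) % 2 → (p, y) ∈ aztecSet n := by
    intro y hy1 hy2 hy3
    rw [hp, mem_aztecSet_iff]
    omega
  have h0 : A 0 = 1 := by
    rw [hA]
    simp only [Nat.cast_zero, mul_zero, sub_zero]
    rw [if_pos (forced_down hM (hmem (n : ℤ) (by omega) (by omega) (by omega)))]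
  have hmid : ∀ m, m + 1 < n → B m + A (m + 1) = 1 := by
    intro m hm
    have e3 : (n : ℤ) - 2 * ((m + 1 : ℕ) : ℤ) = (n : ℤ) - 2 * (m : ℤ) - 2 := by push_cast; ring
    rw [hA, hB]
    simp only [e3]
    have hv : (p, (n : ℤ) - 2 * (m : ℤ) - 2) ∈ aztecSet n :=
      hmem _ (by omega) (by omega) (by omega)
    rcases xor_ud hM hv with ⟨h1, h2⟩ | ⟨h1, h2⟩
    · rw [if_pos h1, if_neg h2]; ring
    · rw [if_neg h1, if_pos h2]; ring
  rw [sum_Iic_fin]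
  have hrepl : ∀ m ∈ Finset.range (k.1 + 1),
      (if h : m < n then cellMatrix n M ⟨m, h⟩ j else 0) = A m + B m - 1 := by
    intro m hm
    simp only [Finset.mem_range] at hm
    rw [dif_pos (by omega : m < n), hcell ⟨m, by omega⟩]
  rw [Finset.sum_congr rfl hrepl]
  have := telescope h0 hmid k.1 hkn
  calc ∑ m ∈ Finset.range (k.1 + 1), (A m + B m - 1)
      = (∑ m ∈ Finset.range (k.1 + 1), (A m + B m)) - (k.1 + 1 : ℤ) := by
        rw [Finset.sum_sub_distrib]; simp
    _ = B k.1 := by rw [this]; ring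
    _ = _ := rfl

private lemma Iic_top {n : ℕ} (hn : 0 < n) :
    (Finset.Iic (⟨n - 1, by omega⟩ : Fin n)) = Finset.univ := by
  ext x
  simp only [Finset.mem_Iic, Finset.mem_univ, iff_true, Fin.le_def]
  have := x.isLt
  simp
  omega

end AztecProof

/-- For every perfect matching `M` of the Aztec diamond graph `A_n`, every cell of
`A_n` contains `0`, `1`, or `2` edges of `M`, and the cell matrix of `M` is an
`n × n` alternating-sign matrix. -/
theorem cellMatrix_isASM (n : ℕ) (M : Finset (Sym2 (ℤ × ℤ)))
    (hM : IsPM (aztec n) (aztecSet n) M) :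
    (∀ p q : ℤ, IsCellCenter n p q → cellEdgeCount M p q ∈ ({0, 1, 2} : Set ℕ)) ∧
      IsASM (cellMatrix n M) := by
  have part1 : ∀ p q : ℤ, cellEdgeCount M p q ∈ ({0, 1, 2} : Set ℕ) := by
    intro p q
    rw [count_row hM]
    split_ifs <;> simp
  refine ⟨fun p q _ => part1 p q, ?_, ?_, ?_, ?_, ?_⟩
  · intro i j
    have h1 : cellMatrix n M i j
        = (cellEdgeCount M (cellCenter n i j).1 (cellCenter n i j).2 : ℤ) - 1 := rfl
    rcases part1 (cellCenter n i j).1 (cellCenter n i j).2 with h | h | h <;>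
      rw [h1, h] <;> norm_num
  · intro i k
    rw [row_sum hM i k]
    split_ifs <;> simp
  · intro i
    have hn : 0 < n := i.pos
    have h1 : (Finset.univ : Finset (Fin n)) = Finset.Iic (⟨n - 1, by omega⟩ : Fin n) :=
      (Iic_top hn).symm
    rw [h1, row_sum hM i ⟨n - 1, by omega⟩]
    rw [if_pos ?_]
    have e1 : 2 * (((⟨n - 1, by omega⟩ : Fin n) : ℕ) : ℤ) - n + 2 = (n : ℤ) := by
      have : ((⟨n - 1, by omega⟩ : Fin n) : ℕ) = n - 1 := rfl
      rw [this]
      push_cast [Nat.cast_sub hn]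
      ring
    rw [e1]
    apply forced_left hM
    rw [mem_aztecSet_iff]
    have := i.isLt
    omega
  · intro j k
    rw [col_sum hM j k]
    split_ifs <;> simp
  · intro j
    have hn : 0 < n := j.pos
    have h1 : (Finset.univ : Finset (Fin n)) = Finset.Iic (⟨n - 1, by omega⟩ : Fin n) :=
      (Iic_top hn).symm
    rw [h1, col_sum hM j ⟨n - 1, by omega⟩]
    rw [if_pos ?_]
    have e1 : (n : ℤ) - 2 * (((⟨n - 1, by omega⟩ : Fin n) : ℕ) : ℤ) - 2 = -(n : ℤ) := by
      have : ((⟨n - 1, by omega⟩ : Fin n) : ℕ) = n - 1 := rfl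
      rw [this]
      push_cast [Nat.cast_sub hn]
      ring
    rw [e1]
    apply forced_up hM
    rw [mem_aztecSet_iff]
    have := j.isLt
    omega
end

section
/- 2-enumeration of alternating-sign matrices: for every n ≥ 1, the sum over all n×n alternating-sign matrices A of 2^{N₊(A)}, where N₊(A) denotes the number of entries of A equal to +1, equals 2^{n(n+1)/2}. -/
set_option linter.dupNamespace false
set_option maxHeartbeats 1000000

namespace ASM2
open Finset Polynomial

def vprod {k : ℕ} (v : Fin k → ℚ) : ℚ := ∏ i : Fin k, ∏ j ∈ Finset.Ioi i, (v j - v i)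

lemma vprod_eq_det {k : ℕ} (v : Fin k → ℚ) : vprod v = (Matrix.vandermonde v).det :=
  (Matrix.det_vandermonde v).symm

lemma det_eval_poly {m : ℕ} (v : Fin m → ℚ) (p : Fin m → ℚ[X]) (hdeg : ∀ i, (p i).natDegree ≤ i) :
    (Matrix.of fun i j => (p j).eval (v i)).det = (∏ i : Fin m, (p i).coeff i) * vprod v := by
  rw [Matrix.eval_matrixOfPolynomials_eq_vandermonde_mul_matrixOfPolynomials v p hdeg,
    Matrix.det_mul,
    Matrix.det_of_upperTriangular (Matrix.matrixOfPolynomials_blockTriangular p hdeg),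
    vprod_eq_det]
  rw [mul_comm]
  rfl

lemma det_succ_sub {k : ℕ} (H : Matrix (Fin (k+1)) (Fin (k+1)) ℚ) (h0 : ∀ i, H i 0 = 1) :
    H.det = Matrix.det (Matrix.of fun i j : Fin k => H i.succ j.succ - H i.castSucc j.succ) := by
  classical
  set L : Matrix (Fin (k+1)) (Fin (k+1)) ℚ :=
    Matrix.of fun i j => if i = j then (1:ℚ) else if (i:ℕ) = (j:ℕ)+1 then -1 else 0 with hL
  have hLH : ∀ (i : Fin k) (j : Fin (k+1)), (L * H) i.succ j = H i.succ j - H i.castSucc j := by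
    intro i j
    rw [Matrix.mul_apply]
    have : ∀ m : Fin (k+1), L i.succ m * H m j =
        (if m = i.succ then H i.succ j else 0) + (if m = i.castSucc then -H i.castSucc j else 0) := by
      intro m
      have hsc : ¬ ((i.succ : Fin (k+1)) = i.castSucc) := by
        simp [Fin.ext_iff]
      simp only [hL, Matrix.of_apply]
      rcases eq_or_ne m i.succ with rfl | h1
      · rw [if_pos rfl, if_pos rfl, if_neg hsc, one_mul, add_zero]
      · rw [if_neg (fun h => h1 h.symm)]
        rcases eq_or_ne m i.castSucc with rfl | h2
        · have hv : ((i.succ : Fin (k+1)) : ℕ) = ((i.castSucc : Fin (k+1)) : ℕ) + 1 := by simp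
          rw [if_pos hv, if_neg h1, if_pos rfl, zero_add, neg_one_mul]
        · have hv2 : ¬ (((i.succ : Fin (k+1)) : ℕ) = (m:ℕ)+1) := by
            intro h
            apply h2
            apply Fin.ext
            simp only [Fin.val_succ] at h
            simp only [Fin.coe_castSucc]
            omega
          rw [if_neg hv2, if_neg h1, if_neg h2, zero_mul, add_zero]
    rw [Finset.sum_congr rfl fun m _ => this m, Finset.sum_add_distrib]
    simp [sub_eq_add_neg]
  have hLH0 : ∀ j : Fin (k+1), (L * H) 0 j = H 0 j := by
    intro j
    rw [Matrix.mul_apply]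
    have : ∀ m : Fin (k+1), L 0 m * H m j = if m = 0 then H 0 j else 0 := by
      intro m
      rcases eq_or_ne m 0 with rfl | h
      · simp [hL]
      · have h' : ¬ ((0:Fin (k+1)) = m) := fun hh => h hh.symm
        have : ¬ ((0:ℕ) = (m:ℕ)+1) := by omega
        simp [hL, h', this, h]
    rw [Finset.sum_congr rfl fun m _ => this m]
    simp
  have hdetL : L.det = 1 := by
    have ht : L.BlockTriangular OrderDual.toDual := by
      intro i j hij
      have h1 : ¬ (i = j) := by
        intro h; subst h; exact lt_irrefl _ hij
      have h2 : ¬ ((i:ℕ) = (j:ℕ)+1) := by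
        have : (i:ℕ) < (j:ℕ) := hij
        omega
      simp [hL, h1, h2]
    rw [Matrix.det_of_lowerTriangular L ht]
    have : ∀ i : Fin (k+1), L i i = 1 := by intro i; simp [hL]
    simp [this]
  have : H.det = (L * H).det := by rw [Matrix.det_mul, hdetL, one_mul]
  rw [this, Matrix.det_succ_column_zero]
  have hterm : ∀ i : Fin (k+1), (-1:ℚ)^(i:ℕ) * (L*H) i 0 *
      ((L*H).submatrix i.succAbove Fin.succ).det =
      if i = 0 then ((L*H).submatrix (Fin.succAbove 0) Fin.succ).det else 0 := by
    intro i
    rcases eq_or_ne i 0 with rfl | h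
    · simp [hLH0, h0]
    · obtain ⟨i', rfl⟩ := Fin.exists_succ_eq.mpr h
      rw [hLH i' 0]
      simp [h0, h]
  rw [Finset.sum_congr rfl fun i _ => hterm i]
  simp only [Finset.sum_ite_eq']
  simp only [Finset.mem_univ, if_true]
  congr 1
  ext i j
  simp [Fin.succAbove_zero, hLH]

noncomputable def faulP (p : ℕ) : ℚ[X] :=
  ∑ i ∈ range (p+1), C (_root_.bernoulli i * ((p+1).choose i) / (p+1)) * X^(p+1-i)

lemma faulP_eval (p t : ℕ) : (faulP p).eval (t:ℚ) = ∑ x ∈ range t, (x:ℚ)^p := by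
  rw [sum_range_pow t p, faulP]
  rw [eval_finset_sum]
  apply Finset.sum_congr rfl
  intro i _
  simp [div_mul_eq_mul_div]

lemma faulP_natDegree_le (p : ℕ) : (faulP p).natDegree ≤ p+1 := by
  apply Polynomial.natDegree_sum_le_of_forall_le
  intro i _
  apply le_trans (Polynomial.natDegree_C_mul_le _ _)
  simp [Polynomial.natDegree_X_pow]

lemma faulP_coeff_top (p : ℕ) : (faulP p).coeff (p+1) = 1/(p+1) := by
  rw [faulP, Polynomial.finset_sum_coeff]
  rw [Finset.sum_eq_single 0]
  · simp [_root_.bernoulli_zero]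
  · intro i hi hne
    rw [Polynomial.coeff_C_mul, Polynomial.coeff_X_pow, if_neg, mul_zero]
    simp only [mem_range] at hi
    omega
  · simp

noncomputable def qpoly (p : ℕ) : ℚ[X] := C 2 * faulP p + X^p

lemma qpoly_eval (p t : ℕ) :
    (qpoly p).eval (t:ℚ) = 2 * (∑ x ∈ range t, (x:ℚ)^p) + (t:ℚ)^p := by
  simp [qpoly, faulP_eval]

lemma qpoly_natDegree_le (p : ℕ) : (qpoly p).natDegree ≤ p+1 := by
  apply le_trans (Polynomial.natDegree_add_le _ _)
  simp only [sup_le_iff]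
  constructor
  · exact le_trans (Polynomial.natDegree_C_mul_le _ _) (faulP_natDegree_le p)
  · simp [Polynomial.natDegree_X_pow]

lemma qpoly_coeff_top (p : ℕ) : (qpoly p).coeff (p+1) = 2/(p+1) := by
  rw [qpoly, Polynomial.coeff_add, Polynomial.coeff_C_mul, faulP_coeff_top,
    Polynomial.coeff_X_pow, if_neg (by omega)]
  ring

lemma trapezoid_sum {u v : ℕ} (huv : u < v) (p : ℕ) :
    ∑ x ∈ Icc u v, (if x = u ∨ x = v then (1:ℚ) else 2) * (x:ℚ)^p
      = (qpoly p).eval (v:ℚ) - (qpoly p).eval (u:ℚ) := by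
  have hne : u ≠ v := Nat.ne_of_lt huv
  have huI : u ∈ Icc u v := by simp [Nat.le_of_lt huv]
  have hvI : v ∈ Icc u v := by simp [Nat.le_of_lt huv]
  have hsplit : ∀ x ∈ Icc u v, (if x = u ∨ x = v then (1:ℚ) else 2) * (x:ℚ)^p
      = 2*(x:ℚ)^p - (if x = u then (u:ℚ)^p else 0) - (if x = v then (v:ℚ)^p else 0) := by
    intro x _
    rcases eq_or_ne x u with rfl | h1
    · rw [if_pos (Or.inl rfl), if_pos rfl, if_neg hne]; ring
    · rcases eq_or_ne x v with rfl | h2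
      · rw [if_pos (Or.inr rfl), if_neg h1, if_pos rfl]; ring
      · rw [if_neg (by tauto), if_neg h1, if_neg h2]; ring
  rw [Finset.sum_congr rfl hsplit]
  rw [Finset.sum_sub_distrib, Finset.sum_sub_distrib, Finset.sum_ite_eq' _ u,
    Finset.sum_ite_eq' _ v, if_pos huI, if_pos hvI, ← Finset.mul_sum]
  have h1 : ∑ x ∈ Icc u v, (x:ℚ)^p
      = (∑ x ∈ range (v+1), (x:ℚ)^p) - (∑ x ∈ range u, (x:ℚ)^p) := by
    rw [← Finset.Ico_add_one_right_eq_Icc, Finset.sum_Ico_eq_sub _ (by omega)]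
  rw [h1, qpoly_eval, qpoly_eval, Finset.sum_range_succ]
  ring
noncomputable def rpoly (k : ℕ) : Fin (k+1) → ℚ[X] :=
  Fin.cases (C 1) (fun j : Fin k => qpoly (j:ℕ))

lemma key_det (k : ℕ) (b : Fin (k+1) → ℕ) (hb : StrictMono b) :
    ∑ a ∈ Fintype.piFinset (fun j : Fin k => Finset.Icc (b j.castSucc) (b j.succ)),
      ((∏ j : Fin k, (if a j = b j.castSucc ∨ a j = b j.succ then (1:ℚ) else 2)) *
        vprod (fun j => ((a j : ℕ) : ℚ)))
      = (2^k / (k.factorial : ℚ)) * vprod (fun i => ((b i : ℕ) : ℚ)) := by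
  classical
  set g : (i : Fin k) → ℕ → (Fin k → ℚ) :=
    fun i x j => (if x = b i.castSucc ∨ x = b i.succ then (1:ℚ) else 2) * (x:ℚ)^(j:ℕ) with hg
  have hsummand : ∀ a ∈ Fintype.piFinset (fun j : Fin k => Finset.Icc (b j.castSucc) (b j.succ)),
      ((∏ j : Fin k, (if a j = b j.castSucc ∨ a j = b j.succ then (1:ℚ) else 2)) *
        vprod (fun j => ((a j : ℕ) : ℚ)))
      = (Matrix.detRowAlternating (R := ℚ) (n := Fin k)).toMultilinearMap
          (fun i : Fin k => g i (a i)) := by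
    intro a _
    have : (fun i : Fin k => g i (a i)) = Matrix.of fun i j =>
        (if a i = b i.castSucc ∨ a i = b i.succ then (1:ℚ) else 2) *
          (Matrix.vandermonde (fun j => ((a j : ℕ) : ℚ))) i j := by
      ext i j
      simp [hg, Matrix.vandermonde]
    show _ = Matrix.det _
    rw [this, Matrix.det_mul_column, vprod_eq_det]
  rw [Finset.sum_congr rfl hsummand]
  rw [← (Matrix.detRowAlternating (R := ℚ) (n := Fin k)).toMultilinearMap.map_sum_finset g
    (fun j : Fin k => Finset.Icc (b j.castSucc) (b j.succ))]
  have hrow : (fun i : Fin k => ∑ x ∈ Finset.Icc (b i.castSucc) (b i.succ), g i x)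
      = Matrix.of (fun i j : Fin k =>
          (Matrix.of fun (i' : Fin (k+1)) (j' : Fin (k+1)) => (rpoly k j').eval ((b i' : ℚ)))
            i.succ j.succ
          - (Matrix.of fun (i' : Fin (k+1)) (j' : Fin (k+1)) => (rpoly k j').eval ((b i' : ℚ)))
            i.castSucc j.succ) := by
    ext i j
    have hlt : b i.castSucc < b i.succ := hb (Fin.castSucc_lt_succ (i := i))
    have := trapezoid_sum hlt (j:ℕ)
    simp only [Matrix.of_apply, rpoly, Fin.cases_succ]
    rw [Finset.sum_apply]
    simpa [hg] using this
  show Matrix.det _ = _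
  rw [hrow, ← det_succ_sub _ (by intro i; simp [rpoly]),
    det_eval_poly _ _ (by
      intro j
      induction j using Fin.cases with
      | zero => simp [rpoly]
      | succ j' => simpa [rpoly] using qpoly_natDegree_le (j':ℕ))]
  congr 1
  rw [Fin.prod_univ_succ]
  simp only [rpoly, Fin.cases_zero, Fin.cases_succ]
  have : ∀ j : Fin k, (qpoly (j:ℕ)).coeff ((j.succ : Fin (k+1)) : ℕ) = 2/((j:ℕ)+1) := by
    intro j
    rw [Fin.val_succ, qpoly_coeff_top]
  rw [Finset.prod_congr rfl (fun j _ => this j)]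
  rw [Finset.prod_div_distrib]
  rw [Finset.prod_const]
  have hfact : ∏ j : Fin k, (((j:ℕ):ℚ) + 1) = (k.factorial : ℚ) := by
    rw [← Finset.prod_range_add_one_eq_factorial k, Nat.cast_prod]
    push_cast
    rw [Fin.prod_univ_eq_prod_range (fun i => ((i:ℚ)+1))]
  rw [hfact]
  simp [Finset.card_univ]

open Finset
open scoped Classical

variable {n : ℕ}

/-- prefix count -/
noncomputable def pc (T : Finset (Fin n)) (m : Fin n) : ℕ := (T.filter (· ≤ m)).card

def interlace (T S : Finset (Fin n)) : Prop :=
  T.card + 1 = S.card ∧ ∀ m, pc T m ≤ pc S m ∧ pc S m ≤ pc T m + 1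

/-- count via order embedding -/
lemma pc_eq_card_filter {T : Finset (Fin n)} {k : ℕ} (h : T.card = k) (m : Fin n) :
    pc T m = (Finset.univ.filter fun j : Fin k => T.orderEmbOfFin h j ≤ m).card := by
  set e := T.orderEmbOfFin h
  have himg : T.filter (· ≤ m) = (Finset.univ.filter fun j : Fin k => e j ≤ m).image e := by
    ext x
    simp only [Finset.mem_filter, Finset.mem_image, Finset.mem_univ, true_and]
    constructor
    · rintro ⟨hx, hxm⟩
      have : x ∈ Set.range e := by
        rw [Finset.range_orderEmbOfFin]
        exact hx
      obtain ⟨j, hj⟩ := this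
      exact ⟨j, by rw [hj]; exact hxm, hj⟩
    · rintro ⟨j, hjm, rfl⟩
      exact ⟨Finset.orderEmbOfFin_mem T h j, hjm⟩
  rw [pc, himg, Finset.card_image_of_injective _ (T.orderEmbOfFin h).injective]

lemma le_iff_pc {T : Finset (Fin n)} {k : ℕ} (h : T.card = k) (j : Fin k) (m : Fin n) :
    T.orderEmbOfFin h j ≤ m ↔ (j : ℕ) + 1 ≤ pc T m := by
  rw [pc_eq_card_filter h m]
  constructor
  · intro hjm
    have hsub : Finset.Iic j ⊆ Finset.univ.filter fun j' : Fin k => T.orderEmbOfFin h j' ≤ m := by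
      intro j' hj'
      simp only [Finset.mem_Iic] at hj'
      simp only [Finset.mem_filter, Finset.mem_univ, true_and]
      exact le_trans ((T.orderEmbOfFin h).monotone hj') hjm
    have := Finset.card_le_card hsub
    rwa [Fin.card_Iic] at this
  · intro hcnt
    by_contra hjm
    push_neg at hjm
    have hsub : (Finset.univ.filter fun j' : Fin k => T.orderEmbOfFin h j' ≤ m) ⊆ Finset.Iio j := by
      intro j' hj'
      simp only [Finset.mem_filter, Finset.mem_univ, true_and] at hj'
      simp only [Finset.mem_Iio]
      by_contra hge
      push_neg at hge
      exact absurd (le_trans ((T.orderEmbOfFin h).monotone hge) hj') (not_le.mpr hjm)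
    have := Finset.card_le_card hsub
    rw [Fin.card_Iio] at this
    omega

lemma interlace_iff_tuple {T S : Finset (Fin n)} {k : ℕ} (hT : T.card = k) (hS : S.card = k+1) :
    interlace T S ↔ ∀ j : Fin k,
      S.orderEmbOfFin hS j.castSucc ≤ T.orderEmbOfFin hT j ∧
      T.orderEmbOfFin hT j ≤ S.orderEmbOfFin hS j.succ := by
  constructor
  · rintro ⟨hcard, hpc⟩ j
    constructor
    · rw [le_iff_pc hS j.castSucc]
      have h1 : (j:ℕ) + 1 ≤ pc T (T.orderEmbOfFin hT j) :=
        (le_iff_pc hT j _).mp le_rfl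
      have := (hpc (T.orderEmbOfFin hT j)).1
      simp only [Fin.coe_castSucc]
      omega
    · rw [le_iff_pc hT j]
      have h1 : ((j.succ : Fin (k+1)) : ℕ) + 1 ≤ pc S (S.orderEmbOfFin hS j.succ) :=
        (le_iff_pc hS j.succ _).mp le_rfl
      have := (hpc (S.orderEmbOfFin hS j.succ)).2
      simp only [Fin.val_succ] at h1
      omega
  · intro hbd
    refine ⟨by omega, fun m => ⟨?_, ?_⟩⟩
    · rw [pc_eq_card_filter hT m, pc_eq_card_filter hS m]
      apply Finset.card_le_card_of_injOn (fun j => j.castSucc)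
      · intro j hj
        simp only [Finset.mem_coe, Finset.mem_filter, Finset.mem_univ, true_and] at hj ⊢
        exact le_trans (hbd j).1 hj
      · intro a _ b _ hab
        exact Fin.castSucc_injective _ hab
    · rw [pc_eq_card_filter hT m, pc_eq_card_filter hS m]
      have hsub : (Finset.univ.filter fun i : Fin (k+1) => S.orderEmbOfFin hS i ≤ m) ⊆
          insert 0 ((Finset.univ.filter fun j : Fin k => T.orderEmbOfFin hT j ≤ m).image Fin.succ) := by
        intro i hi
        simp only [Finset.mem_filter, Finset.mem_univ, true_and] at hi
        rcases Fin.eq_zero_or_eq_succ i with rfl | ⟨j, rfl⟩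
        · exact Finset.mem_insert_self _ _
        · apply Finset.mem_insert_of_mem
          simp only [Finset.mem_image, Finset.mem_filter, Finset.mem_univ, true_and]
          exact ⟨j, le_trans (hbd j).2 hi, rfl⟩
      have := Finset.card_le_card hsub
      have h2 := Finset.card_insert_le (0 : Fin (k+1))
        ((Finset.univ.filter fun j : Fin k => T.orderEmbOfFin hT j ≤ m).image Fin.succ)
      rw [Finset.card_image_of_injective _ (Fin.succ_injective _)] at h2
      omega
open Finset
open scoped Classical

noncomputable def sfq (k : ℕ) : ℚ := ∏ i ∈ range k, (Nat.factorial i : ℚ)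

lemma sfq_ne_zero (k : ℕ) : sfq k ≠ 0 := by
  apply Finset.prod_ne_zero_iff.mpr
  intro i _
  exact_mod_cast Nat.cast_ne_zero.mpr (Nat.factorial_ne_zero i)

noncomputable def Fv (k : ℕ) (b : Fin k → ℚ) : ℚ := 2^(k*(k+1)/2) * vprod b / sfq k

lemma tri_succ (k : ℕ) : (k+1)*(k+2)/2 = k*(k+1)/2 + (k+1) := by
  obtain ⟨m, hm⟩ := Nat.even_mul_succ_self k
  have h2 : (k+1)*(k+2) = k*(k+1) + 2*(k+1) := by ring
  omega

variable {n : ℕ}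

noncomputable def chainW : ℕ → Finset (Fin n) → ℚ
  | 0, S => if S = ∅ then 1 else 0
  | (k+1), S => ∑ T : Finset (Fin n), if interlace T S then 2^((S \ T).card) * chainW k T else 0

lemma image_orderEmbOfFin {S : Finset (Fin n)} {k : ℕ} (h : S.card = k) :
    Finset.univ.image (S.orderEmbOfFin h) = S := by
  ext x
  simp only [Finset.mem_image, Finset.mem_univ, true_and]
  constructor
  · rintro ⟨j, rfl⟩; exact Finset.orderEmbOfFin_mem S h j
  · intro hx
    have : x ∈ Set.range (S.orderEmbOfFin h) := by rw [Finset.range_orderEmbOfFin]; exact hx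
    exact this

lemma orderEmbOfFin_image {k : ℕ} {a : Fin k → Fin n} (ha : StrictMono a)
    (h : (Finset.univ.image a).card = k) : ⇑((Finset.univ.image a).orderEmbOfFin h) = a :=
  (Finset.orderEmbOfFin_unique h (fun j => Finset.mem_image_of_mem a (Finset.mem_univ j)) ha).symm

lemma vprod_zero_of_eq {k : ℕ} {v : Fin k → ℚ} {x y : Fin k} (hxy : x < y) (hv : v x = v y) :
    vprod v = 0 := by
  rw [vprod]
  apply Finset.prod_eq_zero (Finset.mem_univ x)
  apply Finset.prod_eq_zero (Finset.mem_Ioi.mpr hxy)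
  rw [hv, sub_self]

theorem chainW_eq (k : ℕ) (S : Finset (Fin n)) :
    chainW k S = if h : S.card = k then
      Fv k (fun i => (((S.orderEmbOfFin h i : Fin n) : ℕ) : ℚ)) else 0 := by
  induction k generalizing S with
  | zero =>
    rw [chainW]
    by_cases h : S = ∅
    · subst h
      rw [if_pos rfl, dif_pos Finset.card_empty]
      simp [Fv, vprod, sfq]
    · rw [if_neg h, dif_neg (by simpa [Finset.card_eq_zero] using h)]
  | succ k IH =>
    by_cases hS : S.card = k+1
    case neg =>
      rw [dif_neg hS, chainW]
      apply Finset.sum_eq_zero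
      intro T _
      by_cases hI : interlace T S
      · rw [if_pos hI, IH, dif_neg (by have := hI.1; omega), mul_zero]
      · rw [if_neg hI]
    case pos =>
    rw [dif_pos hS, chainW]
    set b' : Fin (k+1) → Fin n := ⇑(S.orderEmbOfFin hS) with hb'
    have hbmono : StrictMono b' := (S.orderEmbOfFin hS).strictMono
    have hnpos : 0 < n := (b' 0).pos
    -- step 2
    rw [← Finset.sum_filter]
    -- monotonicity along bounds
    have hchain : ∀ a : Fin k → Fin n,
        (∀ j : Fin k, b' j.castSucc ≤ a j ∧ a j ≤ b' j.succ) →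
        ∀ x y : Fin k, x < y → a x ≤ a y := by
      intro a hbd x y hxy
      calc a x ≤ b' x.succ := (hbd x).2
        _ ≤ b' y.castSucc := hbmono.monotone (by
            rw [Fin.le_def]
            simp only [Fin.val_succ, Fin.coe_castSucc]
            exact hxy)
        _ ≤ a y := (hbd y).1
    have hvzero : ∀ a : Fin k → Fin n,
        (∀ j : Fin k, b' j.castSucc ≤ a j ∧ a j ≤ b' j.succ) → ¬ StrictMono a →
        vprod (fun j => (((a j : Fin n) : ℕ) : ℚ)) = 0 := by
      intro a hbd hns
      simp only [StrictMono] at hns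
      push_neg at hns
      obtain ⟨x, y, hxy, hle⟩ := hns
      have heq : a x = a y := le_antisymm (hchain a hbd x y hxy) hle
      exact vprod_zero_of_eq hxy (by rw [heq])
    -- step 3: bijection to strictly monotone tuples with bounds
    set AS : Finset (Fin k → Fin n) := Finset.univ.filter
      (fun a => StrictMono a ∧ ∀ j : Fin k, b' j.castSucc ≤ a j ∧ a j ≤ b' j.succ) with hAS
    set g : (Fin k → Fin n) → ℚ := fun a =>
      (2:ℚ)^((S \ Finset.univ.image a).card) * Fv k (fun j => (((a j : Fin n) : ℕ) : ℚ)) with hg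
    have himgcard : ∀ a : Fin k → Fin n, StrictMono a → (Finset.univ.image a).card = k := by
      intro a ha
      rw [Finset.card_image_of_injective _ ha.injective, Finset.card_univ, Fintype.card_fin]
    have hstep3 : ∑ T ∈ Finset.univ.filter (fun T => interlace T S),
        (2:ℚ)^((S \ T).card) * chainW k T = ∑ a ∈ AS, g a := by
      symm
      apply Finset.sum_bij (i := fun (a : Fin k → Fin n) (_ : a ∈ AS) => Finset.univ.image a)
      · -- membership
        intro a ha
        simp only [hAS, Finset.mem_filter, Finset.mem_univ, true_and] at ha
        obtain ⟨hsm, hbd⟩ := ha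
        simp only [Finset.mem_filter, Finset.mem_univ, true_and]
        rw [interlace_iff_tuple (himgcard a hsm) hS]
        rw [orderEmbOfFin_image hsm (himgcard a hsm)]
        intro j
        exact ⟨(hbd j).1, (hbd j).2⟩
      · -- injectivity
        intro a ha a' ha' heq
        simp only [hAS, Finset.mem_filter, Finset.mem_univ, true_and] at ha ha'
        have h1 := orderEmbOfFin_image ha.1 (himgcard a ha.1)
        have h2 := orderEmbOfFin_image ha'.1 (himgcard a' ha'.1)
        have hA : ∀ j : Fin k, a j ∈ Finset.univ.image a' := by
          rw [← heq]
          exact fun j => Finset.mem_image_of_mem a (Finset.mem_univ j)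
        have h3 := Finset.orderEmbOfFin_unique (himgcard a' ha'.1) hA ha.1
        exact h3.trans h2
      · -- surjectivity
        intro T hT
        simp only [Finset.mem_filter, Finset.mem_univ, true_and] at hT
        have hTk : T.card = k := by have := hT.1; omega
        refine ⟨⇑(T.orderEmbOfFin hTk), ?_, ?_⟩
        · simp only [hAS, Finset.mem_filter, Finset.mem_univ, true_and]
          refine ⟨(T.orderEmbOfFin hTk).strictMono, ?_⟩
          intro j
          exact ((interlace_iff_tuple hTk hS).mp hT j)
        · exact (image_orderEmbOfFin hTk)
      · -- summand equality
        intro a ha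
        simp only [hAS, Finset.mem_filter, Finset.mem_univ, true_and] at ha
        simp only [hg]
        rw [IH, dif_pos (himgcard a ha.1)]
        congr 2
        rw [orderEmbOfFin_image ha.1 (himgcard a ha.1)]
    rw [hstep3]
    -- step 4: extend to all bounded tuples
    set A' : Finset (Fin k → Fin n) :=
      Fintype.piFinset (fun j : Fin k => Finset.Icc (b' j.castSucc) (b' j.succ)) with hA'
    have hsub : AS ⊆ A' := by
      intro a ha
      simp only [hAS, Finset.mem_filter, Finset.mem_univ, true_and] at ha
      simp only [hA', Fintype.mem_piFinset, Finset.mem_Icc]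
      exact ha.2
    have hstep4 : ∑ a ∈ AS, g a = ∑ a ∈ A', g a := by
      apply Finset.sum_subset hsub
      intro a haA hnaAS
      have hbd : ∀ j : Fin k, b' j.castSucc ≤ a j ∧ a j ≤ b' j.succ := by
        simp only [hA', Fintype.mem_piFinset, Finset.mem_Icc] at haA
        exact haA
      have hns : ¬ StrictMono a := by
        intro hsm
        exact hnaAS (by simp only [hAS, Finset.mem_filter, Finset.mem_univ, true_and]; exact ⟨hsm, hbd⟩)
      simp [hg, Fv, hvzero a hbd hns]
    rw [hstep4]
    -- step 5: rewrite summand in trapezoid-weight form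
    set Cst : ℚ := 2 * 2^(k*(k+1)/2) / sfq k with hCst
    have hstep5 : ∑ a ∈ A', g a = ∑ a ∈ A', Cst *
        ((∏ j : Fin k, (if a j = b' j.castSucc ∨ a j = b' j.succ then (1:ℚ) else 2)) *
          vprod (fun j => (((a j : Fin n) : ℕ) : ℚ))) := by
      apply Finset.sum_congr rfl
      intro a haA
      have hbd : ∀ j : Fin k, b' j.castSucc ≤ a j ∧ a j ≤ b' j.succ := by
        simp only [hA', Fintype.mem_piFinset, Finset.mem_Icc] at haA
        exact haA
      by_cases hsm : StrictMono a
      case neg =>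
        simp [hg, Fv, hvzero a hbd hsm]
      case pos =>
      -- endpoint membership characterization
      have hmemiff : ∀ j : Fin k, (a j ∈ S ↔ (a j = b' j.castSucc ∨ a j = b' j.succ)) := by
        intro j
        constructor
        · intro hmem
          have : a j ∈ Set.range (S.orderEmbOfFin hS) := by
            rw [Finset.range_orderEmbOfFin]; exact hmem
          obtain ⟨i, hi⟩ := this
          have h1 : j.castSucc ≤ i := by
            rw [← hbmono.le_iff_le]
            show b' j.castSucc ≤ b' i
            rw [hb']; rw [hi]; exact (hbd j).1
          have h2 : i ≤ j.succ := by
            rw [← hbmono.le_iff_le]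
            show b' i ≤ b' j.succ
            rw [hb']; rw [hi]; exact (hbd j).2
          have : i = j.castSucc ∨ i = j.succ := by
            rcases eq_or_lt_of_le h1 with h | h
            · exact Or.inl h.symm
            · right
              apply le_antisymm h2
              rw [Fin.le_def]
              rw [Fin.lt_def] at h
              simp only [Fin.coe_castSucc] at h
              simp only [Fin.val_succ]
              omega
          rcases this with rfl | rfl
          · exact Or.inl hi.symm
          · exact Or.inr hi.symm
        · rintro (h | h)
          · rw [h]; exact Finset.orderEmbOfFin_mem S hS j.castSucc
          · rw [h]; exact Finset.orderEmbOfFin_mem S hS j.succ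
      have hwcard : (S \ Finset.univ.image a).card
          = 1 + (Finset.univ.filter (fun j : Fin k => a j ∉ S)).card := by
        have hTk := himgcard a hsm
        have hdisj := Finset.card_sdiff_add_card_inter S (Finset.univ.image a)
        have hinter : S ∩ Finset.univ.image a
            = (Finset.univ.filter (fun j : Fin k => a j ∈ S)).image a := by
          ext x
          simp only [Finset.mem_inter, Finset.mem_image, Finset.mem_filter, Finset.mem_univ,
            true_and]
          constructor
          · rintro ⟨hxS, j, rfl⟩
            exact ⟨j, hxS, rfl⟩
          · rintro ⟨j, hjS, rfl⟩
            exact ⟨hjS, j, rfl⟩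
        have hintercard : (S ∩ Finset.univ.image a).card
            = (Finset.univ.filter (fun j : Fin k => a j ∈ S)).card := by
          rw [hinter, Finset.card_image_of_injective _ hsm.injective]
        have hsplit := Finset.card_filter_add_card_filter_not
          (s := (Finset.univ : Finset (Fin k))) (p := fun j => a j ∈ S)
        rw [Finset.card_univ, Fintype.card_fin] at hsplit
        omega
      have hprod : (∏ j : Fin k, (if a j = b' j.castSucc ∨ a j = b' j.succ then (1:ℚ) else 2))
          = 2 ^ (Finset.univ.filter (fun j : Fin k => a j ∉ S)).card := by
        have : ∀ j : Fin k, (if a j = b' j.castSucc ∨ a j = b' j.succ then (1:ℚ) else 2)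
            = (if a j ∈ S then (1:ℚ) else 2) := by
          intro j
          by_cases hj : a j ∈ S
          · rw [if_pos ((hmemiff j).mp hj), if_pos hj]
          · rw [if_neg (fun hc => hj ((hmemiff j).mpr hc)), if_neg hj]
        rw [Finset.prod_congr rfl (fun j _ => this j), Finset.prod_ite]
        simp [Finset.prod_const]
      simp only [hg]
      rw [hprod, hwcard, hCst, Fv, pow_add, pow_one]
      field_simp
    rw [hstep5, ← Finset.mul_sum]
    -- step 6: transport to ℕ and apply key_det
    have hbn : StrictMono (fun i : Fin (k+1) => ((b' i : Fin n) : ℕ)) := by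
      intro x y hxy
      exact hbmono hxy
    have htrans : ∑ a ∈ A',
        ((∏ j : Fin k, (if a j = b' j.castSucc ∨ a j = b' j.succ then (1:ℚ) else 2)) *
          vprod (fun j => (((a j : Fin n) : ℕ) : ℚ)))
        = ∑ x ∈ Fintype.piFinset (fun j : Fin k =>
            Finset.Icc ((b' j.castSucc : ℕ)) ((b' j.succ : ℕ))),
          ((∏ j : Fin k, (if x j = ((b' j.castSucc : Fin n) : ℕ) ∨ x j = ((b' j.succ : Fin n) : ℕ)
              then (1:ℚ) else 2)) * vprod (fun j => ((x j : ℕ) : ℚ))) := by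
      apply Finset.sum_nbij' (i := fun (a : Fin k → Fin n) (j : Fin k) => ((a j : Fin n) : ℕ))
        (j := fun (x : Fin k → ℕ) (j : Fin k) =>
          if hx : x j < n then (⟨x j, hx⟩ : Fin n) else ⟨0, hnpos⟩)
      · intro a ha
        simp only [hA', Fintype.mem_piFinset, Finset.mem_Icc] at ha
        simp only [Fintype.mem_piFinset, Finset.mem_Icc]
        intro j
        exact ⟨(ha j).1, (ha j).2⟩
      · intro x hx
        simp only [Fintype.mem_piFinset, Finset.mem_Icc] at hx
        simp only [hA', Fintype.mem_piFinset, Finset.mem_Icc]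
        intro j
        have hlt : x j < n := lt_of_le_of_lt (hx j).2 (b' j.succ).isLt
        rw [dif_pos hlt]
        constructor
        · rw [Fin.le_def]; exact (hx j).1
        · rw [Fin.le_def]; exact (hx j).2
      · intro a ha
        funext j
        simp only []
        rw [dif_pos (a j).isLt]
      · intro x hx
        simp only [Fintype.mem_piFinset, Finset.mem_Icc] at hx
        funext j
        have hlt : x j < n := lt_of_le_of_lt (hx j).2 (b' j.succ).isLt
        simp only []
        rw [dif_pos hlt]
      · intro a ha
        congr 1
        apply Finset.prod_congr rfl
        intro j _
        congr 1
        simp only [eq_iff_iff]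
        constructor
        · rintro (h | h)
          · exact Or.inl (by rw [h])
          · exact Or.inr (by rw [h])
        · rintro (h | h)
          · exact Or.inl (Fin.val_injective h)
          · exact Or.inr (Fin.val_injective h)
    rw [htrans, key_det k (fun i : Fin (k+1) => ((b' i : Fin n) : ℕ)) hbn]
    -- step 7: arithmetic
    rw [hCst, Fv]
    have hsfq : sfq (k+1) = sfq k * (Nat.factorial k : ℚ) := by
      rw [sfq, sfq, Finset.prod_range_succ]
    have hpow : (2:ℚ)^((k+1)*(k+2)/2) = 2 * 2^(k*(k+1)/2) * 2^k := by
      rw [tri_succ, pow_add]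
      ring
    rw [hsfq, hpow]
    have h1 : sfq k ≠ 0 := sfq_ne_zero k
    have h2 : (Nat.factorial k : ℚ) ≠ 0 := Nat.cast_ne_zero.mpr (Nat.factorial_ne_zero k)
    field_simp
open Finset
open scoped Classical

lemma vprod_id (m : ℕ) : vprod (fun i : Fin m => ((i:ℕ):ℚ)) = sfq m := by
  cases m with
  | zero => simp [vprod, sfq]
  | succ m =>
    rw [vprod_eq_det]
    have h := Matrix.det_vandermonde_id_eq_superFactorial (R := ℚ) m
    have hc : (fun (i : Fin (m+1)) => ((i:ℕ):ℚ)) = (fun (i : Fin (m+1)) => (i : ℚ)) := rfl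
    rw [hc, h, sfq]
    rw [← Nat.prod_range_succ_factorial m, Nat.cast_prod]

theorem chainW_univ {n : ℕ} : chainW n (Finset.univ : Finset (Fin n)) = 2^(n*(n+1)/2) := by
  have hcard : (Finset.univ : Finset (Fin n)).card = n := by
    rw [Finset.card_univ, Fintype.card_fin]
  rw [chainW_eq, dif_pos hcard]
  have hid : ⇑((Finset.univ : Finset (Fin n)).orderEmbOfFin hcard) = fun i => i :=
    (Finset.orderEmbOfFin_unique hcard (fun j => Finset.mem_univ j) strictMono_id).symm
  rw [Fv]
  have : (fun i : Fin n => ((((Finset.univ : Finset (Fin n)).orderEmbOfFin hcard) i : ℕ) : ℚ))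
      = fun i : Fin n => ((i:ℕ):ℚ) := by
    funext i
    rw [hid]
  rw [this, vprod_id, mul_div_assoc, div_self (sfq_ne_zero n), mul_one]
open Finset
open scoped Classical

variable {n : ℕ}

noncomputable def chains (k : ℕ) (S : Finset (Fin n)) : Finset (Fin (k+1) → Finset (Fin n)) :=
  Finset.univ.filter (fun c => c 0 = ∅ ∧ c (Fin.last k) = S ∧
    ∀ i : Fin k, interlace (c i.castSucc) (c i.succ))

noncomputable def cweight {k : ℕ} (c : Fin (k+1) → Finset (Fin n)) : ℚ :=
  ∏ i : Fin k, (2:ℚ) ^ ((c i.succ \ c i.castSucc).card)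

theorem sum_chains (k : ℕ) (S : Finset (Fin n)) :
    ∑ c ∈ chains k S, cweight c = chainW k S := by
  induction k generalizing S with
  | zero =>
    rw [chainW]
    by_cases hs : S = ∅
    · subst hs
      have hone : chains 0 (∅ : Finset (Fin n)) = {fun _ => ∅} := by
        ext c
        simp only [chains, Finset.mem_filter, Finset.mem_univ, true_and,
          Finset.mem_singleton]
        constructor
        · rintro ⟨h0, -, -⟩
          funext i
          have hi : i = 0 := by apply Fin.ext; omega
          rw [hi, h0]
        · rintro rfl
          exact ⟨rfl, rfl, fun i => i.elim0⟩
      rw [hone, if_pos rfl, Finset.sum_singleton, cweight]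
      simp
    · rw [if_neg hs]
      have hnone : chains 0 S = ∅ := by
        ext c
        simp only [chains, Finset.mem_filter, Finset.mem_univ, true_and,
          Finset.notMem_empty, iff_false]
        rintro ⟨h0, hlast, -⟩
        apply hs
        rw [← hlast, show (Fin.last 0) = 0 from rfl, h0]
      rw [hnone, Finset.sum_empty]
  | succ k IH =>
    rw [chains, Finset.sum_filter]
    -- snoc decomposition
    rw [← Fintype.sum_equiv (Fin.snocEquiv (fun _ : Fin (k+2) => Finset (Fin n)))
      (fun p => _) (fun c => if c 0 = ∅ ∧ c (Fin.last (k+1)) = S ∧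
        (∀ i : Fin (k+1), interlace (c i.castSucc) (c i.succ)) then cweight c else 0)
      (fun p => rfl)]
    rw [Fintype.sum_prod_type]
    -- identify the snoc'd chain conditions
    have hzero : ∀ (x : Finset (Fin n)) (c' : Fin (k+1) → Finset (Fin n)),
        (Fin.snoc c' x : Fin (k+2) → Finset (Fin n)) 0 = c' 0 := by
      intro x c'
      rw [show (0 : Fin (k+2)) = Fin.castSucc 0 from (Fin.castSucc_zero).symm, Fin.snoc_castSucc]
    have hlast : ∀ (x : Finset (Fin n)) (c' : Fin (k+1) → Finset (Fin n)),
        (Fin.snoc c' x : Fin (k+2) → Finset (Fin n)) (Fin.last (k+1)) = x := by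
      intro x c'
      rw [Fin.snoc_last]
    have hsucccast : ∀ (x : Finset (Fin n)) (c' : Fin (k+1) → Finset (Fin n)) (j : Fin k),
        (Fin.snoc c' x : Fin (k+2) → Finset (Fin n)) (Fin.castSucc j).succ = c' j.succ := by
      intro x c' j
      rw [Fin.succ_castSucc, Fin.snoc_castSucc]
    have hcastcast : ∀ (x : Finset (Fin n)) (c' : Fin (k+1) → Finset (Fin n)) (j : Fin k),
        (Fin.snoc c' x : Fin (k+2) → Finset (Fin n)) (Fin.castSucc j).castSucc = c' j.castSucc := by
      intro x c' j
      rw [Fin.snoc_castSucc]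
    have hlastsucc : ∀ (x : Finset (Fin n)) (c' : Fin (k+1) → Finset (Fin n)),
        (Fin.snoc c' x : Fin (k+2) → Finset (Fin n)) (Fin.last k).succ = x := by
      intro x c'
      rw [Fin.succ_last, Fin.snoc_last]
    have hlastcast : ∀ (x : Finset (Fin n)) (c' : Fin (k+1) → Finset (Fin n)),
        (Fin.snoc c' x : Fin (k+2) → Finset (Fin n)) (Fin.last k).castSucc = c' (Fin.last k) := by
      intro x c'
      rw [Fin.snoc_castSucc]
    have hcond : ∀ (x : Finset (Fin n)) (c' : Fin (k+1) → Finset (Fin n)),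
        ((Fin.snoc c' x : Fin (k+2) → Finset (Fin n)) 0 = ∅ ∧
          (Fin.snoc c' x : Fin (k+2) → Finset (Fin n)) (Fin.last (k+1)) = S ∧
          ∀ i : Fin (k+1), interlace ((Fin.snoc c' x : Fin (k+2) → Finset (Fin n)) i.castSucc)
            ((Fin.snoc c' x : Fin (k+2) → Finset (Fin n)) i.succ))
        ↔ (x = S ∧ (c' 0 = ∅ ∧ interlace (c' (Fin.last k)) x ∧
            ∀ j : Fin k, interlace (c' j.castSucc) (c' j.succ))) := by
      intro x c'
      rw [hzero, hlast]
      constructor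
      · rintro ⟨h0, hS, hI⟩
        refine ⟨hS, h0, ?_, ?_⟩
        · have := hI (Fin.last k)
          rwa [hlastcast, hlastsucc] at this
        · intro j
          have := hI (Fin.castSucc j)
          rwa [hcastcast, hsucccast] at this
      · rintro ⟨hS, h0, hlastI, hI⟩
        refine ⟨h0, hS, ?_⟩
        intro i
        induction i using Fin.lastCases with
        | last =>
          rw [hlastcast, hlastsucc]
          exact hlastI
        | cast j =>
          rw [hcastcast, hsucccast]
          exact hI j
    have hw : ∀ (x : Finset (Fin n)) (c' : Fin (k+1) → Finset (Fin n)),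
        cweight (Fin.snoc c' x : Fin (k+2) → Finset (Fin n))
          = cweight c' * 2^((x \ c' (Fin.last k)).card) := by
      intro x c'
      rw [cweight, Fin.prod_univ_castSucc, hlastcast, hlastsucc, cweight]
      congr 1
      apply Finset.prod_congr rfl
      intro j _
      rw [hcastcast, hsucccast]
    -- collapse the x-sum at x = S
    have hxcollapse : ∀ (c' : Fin (k+1) → Finset (Fin n)) (x : Finset (Fin n)),
        (if (Fin.snoc c' x : Fin (k+2) → Finset (Fin n)) 0 = ∅ ∧
            (Fin.snoc c' x : Fin (k+2) → Finset (Fin n)) (Fin.last (k+1)) = S ∧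
            ∀ i : Fin (k+1), interlace ((Fin.snoc c' x : Fin (k+2) → Finset (Fin n)) i.castSucc)
              ((Fin.snoc c' x : Fin (k+2) → Finset (Fin n)) i.succ)
          then cweight (Fin.snoc c' x : Fin (k+2) → Finset (Fin n)) else 0)
        = (if x = S then (if (c' 0 = ∅ ∧ interlace (c' (Fin.last k)) S ∧
            ∀ j : Fin k, interlace (c' j.castSucc) (c' j.succ))
          then cweight c' * 2^((S \ c' (Fin.last k)).card) else 0) else 0) := by
      intro c' x
      by_cases hx : x = S
      · subst hx
        rw [if_pos rfl]
        by_cases hq : (c' 0 = ∅ ∧ interlace (c' (Fin.last k)) x ∧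
            ∀ j : Fin k, interlace (c' j.castSucc) (c' j.succ))
        · rw [if_pos ((hcond x c').mpr ⟨rfl, hq⟩), if_pos hq, hw]
        · rw [if_neg, if_neg hq]
          intro hc
          exact hq ((hcond x c').mp hc).2
      · rw [if_neg hx, if_neg]
        intro hc
        exact hx ((hcond x c').mp hc).1
    have hEq : ∀ (x : Finset (Fin n)) (y : Fin (k+1) → Finset (Fin n)),
        (Fin.snocEquiv (fun _ : Fin (k+2) => Finset (Fin n))) (x, y) = Fin.snoc y x :=
      fun _ _ => rfl
    simp only [hEq]
    rw [Finset.sum_congr rfl (fun x _ => Finset.sum_congr rfl (fun c' _ => hxcollapse c' x))]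
    set F : (Fin (k+1) → Finset (Fin n)) → ℚ := fun c' =>
      (if (c' 0 = ∅ ∧ interlace (c' (Fin.last k)) S ∧
          ∀ j : Fin k, interlace (c' j.castSucc) (c' j.succ))
        then cweight c' * 2^((S \ c' (Fin.last k)).card) else 0) with hF
    have hcol2 : ∀ x : Finset (Fin n),
        (∑ c' : Fin (k+1) → Finset (Fin n), if x = S then F c' else 0)
          = if x = S then (∑ c' : Fin (k+1) → Finset (Fin n), F c') else 0 := by
      intro x
      by_cases hx : x = S
      · subst hx
        simp
      · simp only [if_neg hx, Finset.sum_const_zero]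
    rw [Finset.sum_congr rfl (fun x _ => hcol2 x), Finset.sum_ite_eq' Finset.univ S,
      if_pos (Finset.mem_univ S)]
    -- fiber over the last entry
    rw [← Finset.sum_fiberwise Finset.univ (fun c' : Fin (k+1) → Finset (Fin n) =>
      c' (Fin.last k)) F]
    rw [chainW]
    apply Finset.sum_congr rfl
    intro T _
    by_cases hTS : interlace T S
    case neg =>
      rw [if_neg hTS]
      apply Finset.sum_eq_zero
      intro c' hc'
      simp only [Finset.mem_filter, Finset.mem_univ, true_and] at hc'
      simp only [hF]
      rw [if_neg]
      rintro ⟨-, hI, -⟩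
      rw [hc'] at hI
      exact hTS hI
    case pos =>
    rw [if_pos hTS]
    have hper : ∀ c' ∈ Finset.univ.filter (fun c' : Fin (k+1) → Finset (Fin n) =>
        c' (Fin.last k) = T), F c' = if (c' 0 = ∅ ∧ c' (Fin.last k) = T ∧
          ∀ j : Fin k, interlace (c' j.castSucc) (c' j.succ))
        then cweight c' * 2^((S \ T).card) else 0 := by
      intro c' hc'
      simp only [Finset.mem_filter, Finset.mem_univ, true_and] at hc'
      simp only [hF]
      by_cases hq : (c' 0 = ∅ ∧ ∀ j : Fin k, interlace (c' j.castSucc) (c' j.succ))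
      · rw [if_pos ⟨hq.1, by rw [hc']; exact hTS, hq.2⟩, if_pos ⟨hq.1, hc', hq.2⟩, hc']
      · rw [if_neg, if_neg]
        · rintro ⟨h1, -, h3⟩
          exact hq ⟨h1, h3⟩
        · rintro ⟨h1, -, h3⟩
          exact hq ⟨h1, h3⟩
    rw [Finset.sum_congr rfl hper, ← Finset.sum_filter]
    have hset : (Finset.univ.filter (fun c' : Fin (k+1) → Finset (Fin n) =>
        c' (Fin.last k) = T)).filter (fun c' => c' 0 = ∅ ∧ c' (Fin.last k) = T ∧
          ∀ j : Fin k, interlace (c' j.castSucc) (c' j.succ)) = chains k T := by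
      rw [chains, Finset.filter_filter]
      apply Finset.filter_congr
      intro c' _
      tauto
    rw [hset, ← Finset.sum_mul, IH, mul_comm]
open Finset
open scoped Classical

variable {n : ℕ}


noncomputable def colsum (A : Matrix (Fin n) (Fin n) ℤ) (i : Fin (n+1)) (j : Fin n) : ℤ :=
  ∑ i' ∈ Finset.univ.filter (fun i' : Fin n => (i':ℕ) < (i:ℕ)), A i' j

noncomputable def phi (A : Matrix (Fin n) (Fin n) ℤ) : Fin (n+1) → Finset (Fin n) :=
  fun i => Finset.univ.filter (fun j => colsum A i j = 1)

noncomputable def psi (c : Fin (n+1) → Finset (Fin n)) : Matrix (Fin n) (Fin n) ℤ :=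
  fun i j => (if j ∈ c i.succ then (1:ℤ) else 0) - (if j ∈ c i.castSucc then (1:ℤ) else 0)

lemma filt_succ {t : ℕ} (ht : t < n) :
    Finset.univ.filter (fun i' : Fin n => (i':ℕ) < t+1)
      = insert (⟨t, ht⟩ : Fin n) (Finset.univ.filter (fun i' : Fin n => (i':ℕ) < t)) := by
  ext i'
  simp only [Finset.mem_filter, Finset.mem_univ, true_and, Finset.mem_insert, Fin.ext_iff]
  omega

lemma filt_notmem {t : ℕ} (ht : t < n) :
    (⟨t, ht⟩ : Fin n) ∉ Finset.univ.filter (fun i' : Fin n => (i':ℕ) < t) := by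
  simp

lemma filt_Iic (i₀ : Fin n) :
    Finset.univ.filter (fun i' : Fin n => (i':ℕ) < (i₀:ℕ)+1) = Finset.Iic i₀ := by
  ext i'
  simp only [Finset.mem_filter, Finset.mem_univ, true_and, Finset.mem_Iic, Fin.le_def]
  omega

lemma filt_all : Finset.univ.filter (fun i' : Fin n => (i':ℕ) < n) = Finset.univ := by
  ext i'
  simp [i'.isLt]

lemma sum_indicator_Iic (T : Finset (Fin n)) (m : Fin n) :
    (∑ j ∈ Finset.Iic m, (if j ∈ T then (1:ℤ) else 0)) = (pc T m : ℤ) := by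
  rw [pc]
  have : T.filter (· ≤ m) = (Finset.Iic m).filter (· ∈ T) := by
    ext j
    simp only [Finset.mem_filter, Finset.mem_Iic]
    tauto
  rw [this, Finset.card_filter]
  push_cast
  rfl

lemma sum_indicator_univ (T : Finset (Fin n)) :
    (∑ j, (if j ∈ T then (1:ℤ) else 0)) = (T.card : ℤ) := by
  have : T = Finset.univ.filter (· ∈ T) := by
    ext j; simp
  rw [this]
  rw [Finset.card_filter]
  push_cast
  simp
open Finset
open scoped Classical

variable {n : ℕ}

section PhiFacts

variable {A : Matrix (Fin n) (Fin n) ℤ} (hA : _root_.IsASM A)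

lemma colsum_zero (j : Fin n) : colsum A 0 j = 0 := by
  rw [colsum]
  have : Finset.univ.filter (fun i' : Fin n => (i':ℕ) < ((0 : Fin (n+1)):ℕ)) = ∅ := by
    ext i'; simp
  rw [this, Finset.sum_empty]

lemma colsum_succ_row (i : Fin n) (j : Fin n) :
    colsum A i.succ j = colsum A i.castSucc j + A i j := by
  rw [colsum, colsum]
  have h1 : ((i.succ : Fin (n+1)) : ℕ) = (i:ℕ)+1 := rfl
  have h2 : ((i.castSucc : Fin (n+1)) : ℕ) = (i:ℕ) := rfl
  rw [h1, h2, filt_succ i.isLt, Finset.sum_insert (filt_notmem i.isLt)]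
  have : (⟨(i:ℕ), i.isLt⟩ : Fin n) = i := rfl
  rw [this]
  ring

include hA

lemma colsum_mem (i : Fin (n+1)) (j : Fin n) : colsum A i j = 0 ∨ colsum A i j = 1 := by
  induction i using Fin.cases with
  | zero => left; exact colsum_zero j
  | succ i₀ =>
    have : colsum A i₀.succ j = ∑ i' ∈ Finset.Iic i₀, A i' j := by
      rw [colsum, show ((i₀.succ : Fin (n+1)) : ℕ) = (i₀:ℕ)+1 from rfl, filt_Iic]
    rw [this]
    have := hA.2.2.2.1 j i₀
    simpa [Set.mem_insert_iff] using this

lemma indicator_phi (i : Fin (n+1)) (j : Fin n) :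
    (if j ∈ phi A i then (1:ℤ) else 0) = colsum A i j := by
  by_cases h : colsum A i j = 1
  · rw [if_pos, h]
    simp [phi, h]
  · rw [if_neg, (colsum_mem hA i j).resolve_right h]
    simp [phi, h]

lemma pc_phi (i : Fin (n+1)) (m : Fin n) :
    (pc (phi A i) m : ℤ) = ∑ j ∈ Finset.Iic m, colsum A i j := by
  rw [← sum_indicator_Iic]
  exact Finset.sum_congr rfl (fun j _ => indicator_phi hA i j)

lemma card_phi (i : Fin (n+1)) :
    ((phi A i).card : ℤ) = ∑ j, colsum A i j := by
  rw [← sum_indicator_univ]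
  exact Finset.sum_congr rfl (fun j _ => indicator_phi hA i j)

lemma interlace_phi (i : Fin n) : interlace (phi A i.castSucc) (phi A i.succ) := by
  constructor
  · have hcard : ((phi A i.succ).card : ℤ) = ((phi A i.castSucc).card : ℤ) + 1 := by
      rw [card_phi hA, card_phi hA]
      have : ∀ j, colsum A i.succ j = colsum A i.castSucc j + A i j :=
        fun j => colsum_succ_row i j
      rw [Finset.sum_congr rfl (fun j _ => this j), Finset.sum_add_distrib, hA.2.2.1 i]
    omega
  · intro m
    have hpc : (pc (phi A i.succ) m : ℤ) = (pc (phi A i.castSucc) m : ℤ)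
        + ∑ j ∈ Finset.Iic m, A i j := by
      rw [pc_phi hA, pc_phi hA]
      rw [Finset.sum_congr rfl (fun j (_ : j ∈ Finset.Iic m) => colsum_succ_row i j),
        Finset.sum_add_distrib]
    have hrow := hA.2.1 i m
    simp only [Set.mem_insert_iff, Set.mem_singleton_iff] at hrow
    rcases hrow with h | h <;> rw [h] at hpc <;> omega

lemma phi_zero : phi A 0 = ∅ := by
  ext j
  simp [phi, colsum_zero]

lemma phi_last : phi A (Fin.last n) = Finset.univ := by
  ext j
  simp only [phi, Finset.mem_filter, Finset.mem_univ, true_and, iff_true]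
  rw [colsum, show ((Fin.last n : Fin (n+1)) : ℕ) = n from rfl, filt_all]
  exact hA.2.2.2.2 j

lemma phi_mem_chains : phi A ∈ chains n (Finset.univ : Finset (Fin n)) := by
  simp only [chains, Finset.mem_filter, Finset.mem_univ, true_and]
  exact ⟨phi_zero hA, phi_last hA, fun i => interlace_phi hA i⟩

lemma sdiff_phi (i : Fin n) :
    phi A i.succ \ phi A i.castSucc = Finset.univ.filter (fun j => A i j = 1) := by
  ext j
  simp only [Finset.mem_sdiff, phi, Finset.mem_filter, Finset.mem_univ, true_and]
  have hd := colsum_succ_row (A := A) i j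
  have h1 := colsum_mem hA i.succ j
  have h2 := colsum_mem hA i.castSucc j
  constructor
  · rintro ⟨hs, hc⟩
    rw [hs] at hd
    rcases h2 with h | h
    · rw [h] at hd; omega
    · exact absurd h hc
  · intro hAij
    rw [hAij] at hd
    rcases h1 with h | h <;> rcases h2 with h' | h' <;> rw [h, h'] at hd <;> omega
    
lemma psi_phi : psi (phi A) = A := by
  funext i j
  rw [psi, indicator_phi hA, indicator_phi hA, colsum_succ_row]
  ring

end PhiFacts
open Finset
open scoped Classical

variable {n : ℕ}

section PsiFacts

variable {c : Fin (n+1) → Finset (Fin n)}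

lemma colsum_psi (h0 : c 0 = ∅) :
    ∀ (t : ℕ) (ht : t ≤ n) (j : Fin n),
      (∑ i' ∈ Finset.univ.filter (fun i' : Fin n => (i':ℕ) < t), psi c i' j)
        = (if j ∈ c ⟨t, Nat.lt_succ_of_le ht⟩ then (1:ℤ) else 0) := by
  intro t
  induction t with
  | zero =>
    intro ht j
    have he : Finset.univ.filter (fun i' : Fin n => (i':ℕ) < 0) = ∅ := by
      ext i'; simp
    rw [he, Finset.sum_empty]
    have : (⟨0, Nat.lt_succ_of_le ht⟩ : Fin (n+1)) = 0 := rfl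
    rw [this, h0]
    simp
  | succ t IHt =>
    intro ht j
    have ht' : t < n := ht
    rw [filt_succ ht', Finset.sum_insert (filt_notmem ht'), IHt (le_of_lt ht') j]
    rw [psi]
    have hsucc : ((⟨t, ht'⟩ : Fin n).succ : Fin (n+1)) = ⟨t+1, Nat.lt_succ_of_le ht⟩ := rfl
    have hcast : ((⟨t, ht'⟩ : Fin n).castSucc : Fin (n+1))
        = ⟨t, Nat.lt_succ_of_le (le_of_lt ht')⟩ := rfl
    rw [hsucc, hcast]
    ring

lemma colsum_psi_eq (h0 : c 0 = ∅) (i : Fin (n+1)) (j : Fin n) :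
    colsum (psi c) i j = (if j ∈ c i then (1:ℤ) else 0) := by
  rw [colsum]
  have := colsum_psi h0 (i:ℕ) (Nat.lt_succ_iff.mp i.isLt) j
  rw [this]

lemma isASM_psi (hc : c ∈ chains n (Finset.univ : Finset (Fin n))) : _root_.IsASM (psi c) := by
  simp only [chains, Finset.mem_filter, Finset.mem_univ, true_and] at hc
  obtain ⟨h0, hl, hI⟩ := hc
  refine ⟨?_, ?_, ?_, ?_, ?_⟩
  · intro i j
    rw [psi]
    simp only [Set.mem_insert_iff, Set.mem_singleton_iff]
    by_cases h1 : j ∈ c i.succ <;> by_cases h2 : j ∈ c i.castSucc <;> simp [h1, h2]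
  · intro i m
    have : (∑ j ∈ Finset.Iic m, psi c i j)
        = (pc (c i.succ) m : ℤ) - (pc (c i.castSucc) m : ℤ) := by
      rw [← sum_indicator_Iic, ← sum_indicator_Iic, ← Finset.sum_sub_distrib]
      rfl
    rw [this]
    have h := (hI i).2 m
    simp only [Set.mem_insert_iff, Set.mem_singleton_iff]
    omega
  · intro i
    have : (∑ j, psi c i j) = ((c i.succ).card : ℤ) - ((c i.castSucc).card : ℤ) := by
      rw [← sum_indicator_univ, ← sum_indicator_univ, ← Finset.sum_sub_distrib]
      rfl
    rw [this]
    have h := (hI i).1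
    omega
  · intro j m
    have hfi : Finset.Iic m = Finset.univ.filter (fun i' : Fin n => (i':ℕ) < (m:ℕ)+1) :=
      (filt_Iic m).symm
    rw [hfi, colsum_psi h0 ((m:ℕ)+1) m.isLt j]
    by_cases h : j ∈ c ⟨(m:ℕ)+1, Nat.lt_succ_of_le m.isLt⟩ <;> simp [h]
  · intro j
    have hfa : (Finset.univ : Finset (Fin n))
        = Finset.univ.filter (fun i' : Fin n => (i':ℕ) < n) := filt_all.symm
    rw [hfa, colsum_psi h0 n le_rfl j]
    have : (⟨n, Nat.lt_succ_of_le le_rfl⟩ : Fin (n+1)) = Fin.last n := rfl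
    rw [this, hl]
    simp

lemma phi_psi (hc : c ∈ chains n (Finset.univ : Finset (Fin n))) : phi (psi c) = c := by
  have h0 : c 0 = ∅ := by
    simp only [chains, Finset.mem_filter, Finset.mem_univ, true_and] at hc
    exact hc.1
  funext i
  rw [phi]
  ext j
  simp only [Finset.mem_filter, Finset.mem_univ, true_and]
  rw [colsum_psi_eq h0]
  by_cases h : j ∈ c i <;> simp [h]

end PsiFacts

lemma weight_phi {A : Matrix (Fin n) (Fin n) ℤ} (hA : _root_.IsASM A) :
    ((2:ℚ) ^ (Finset.univ.filter fun ij : Fin n × Fin n => A ij.1 ij.2 = 1).card)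
      = cweight (phi A) := by
  have hcard : (Finset.univ.filter fun ij : Fin n × Fin n => A ij.1 ij.2 = 1).card
      = ∑ i : Fin n, (Finset.univ.filter fun j : Fin n => A i j = 1).card := by
    rw [Finset.card_filter]
    rw [Fintype.sum_prod_type]
    apply Finset.sum_congr rfl
    intro i _
    rw [Finset.card_filter]
  rw [hcard, ← Finset.prod_pow_eq_pow_sum, cweight]
  apply Finset.prod_congr rfl
  intro i _
  rw [sdiff_phi hA]

lemma asm_finite : ({A : Matrix (Fin n) (Fin n) ℤ | _root_.IsASM A}).Finite := by
  apply Set.Finite.subset (Set.Finite.pi (fun i : Fin n => Set.Finite.pi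
    (fun j : Fin n => ((Set.finite_singleton (1:ℤ)).insert 0).insert (-1))))
  intro A hA
  rw [Set.mem_pi]
  intro i _
  rw [Set.mem_pi]
  intro j _
  exact hA.1 i j

theorem asm_two_enumeration_aux (n : ℕ) (hn : 1 ≤ n) :
    (∑ᶠ A ∈ {A : Matrix (Fin n) (Fin n) ℤ | _root_.IsASM A},
        (2 : ℕ) ^ (Finset.univ.filter fun ij : Fin n × Fin n => A ij.1 ij.2 = 1).card)
      = 2 ^ (n * (n + 1) / 2) := by
  have hfin : ({A : Matrix (Fin n) (Fin n) ℤ | _root_.IsASM A}).Finite := asm_finite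
  rw [← Set.Finite.coe_toFinset hfin, finsum_mem_coe_finset]
  have hQ : ((∑ A ∈ hfin.toFinset,
      (2 : ℕ) ^ (Finset.univ.filter fun ij : Fin n × Fin n => A ij.1 ij.2 = 1).card : ℕ) : ℚ)
      = ((2 ^ (n * (n + 1) / 2) : ℕ) : ℚ) := by
    push_cast
    have hbij : ∑ A ∈ hfin.toFinset,
        ((2:ℚ) ^ (Finset.univ.filter fun ij : Fin n × Fin n => A ij.1 ij.2 = 1).card)
        = ∑ c ∈ chains n (Finset.univ : Finset (Fin n)), cweight c := by
      apply Finset.sum_nbij' (i := fun A => phi A) (j := fun c => psi c)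
      · intro A hA
        rw [Set.Finite.mem_toFinset] at hA
        exact phi_mem_chains hA
      · intro c hc
        rw [Set.Finite.mem_toFinset]
        exact isASM_psi hc
      · intro A hA
        rw [Set.Finite.mem_toFinset] at hA
        exact psi_phi hA
      · intro c hc
        exact phi_psi hc
      · intro A hA
        rw [Set.Finite.mem_toFinset] at hA
        exact weight_phi hA
    rw [hbij, sum_chains, chainW_univ]
  exact_mod_cast hQ

end ASM2

open scoped Classical in
/-- **2-enumeration of alternating-sign matrices**: the sum, over all `n × n`
alternating-sign matrices `A`, of `2 ^ N₊(A)` — where `N₊(A)` is the number of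
entries of `A` equal to `+1` — equals `2 ^ (n (n + 1) / 2)`. -/
theorem asm_two_enumeration (n : ℕ) (hn : 1 ≤ n) :
    (∑ᶠ A ∈ {A : Matrix (Fin n) (Fin n) ℤ | IsASM A},
        (2 : ℕ) ^ (Finset.univ.filter fun ij : Fin n × Fin n => A ij.1 ij.2 = 1).card)
      = 2 ^ (n * (n + 1) / 2) := by
  exact ASM2.asm_two_enumeration_aux n hn
end
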